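/- arXiv:2104.04583 — 9 statements merged into one kernel-verified Lean document; each statement's English description precedes it below -/
import Mathlib

section
/- Let L be a nondegenerate integral lattice of signature (1,n) (i.e., the associated real quadratic form has exactly one positive eigenvalue), and let h ∈ L satisfy h² > 0. Then for any u, v ∈ L, the determinant of the 3×3 Gram matrix of (h, u, v) is nonnegative; moreover it is zero if and only if h, u, v are linearly dependent over ℚ. -/
open Matrix

/-- The bilinear form `B` is symmetric. -/
def IsSymmBilin {L : Type*} [AddCommGroup L] [Module ℤ L]
    (B : L →ₗ[ℤ] L →ₗ[ℤ] ℤ) : Prop := ∀ x y : L, B x y = B y x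

/-- The integral lattice `(L, B)` is nondegenerate of signature `(1, n)`:
it is free of rank `n + 1` and its real Gram matrix is congruent to
`diag(1, -1, …, -1)`. -/
def HasSigOneN {L : Type*} [AddCommGroup L] [Module ℤ L]
    (B : L →ₗ[ℤ] L →ₗ[ℤ] ℤ) (n : ℕ) : Prop :=
  ∃ b : Module.Basis (Fin (n + 1)) ℤ L, ∃ P : Matrix (Fin (n + 1)) (Fin (n + 1)) ℝ,
    IsUnit P.det ∧
      P.transpose * (Matrix.of fun i j => ((B (b i) (b j) : ℤ) : ℝ)) * P =
        Matrix.diagonal (fun i => if i = 0 then (1 : ℝ) else -1)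

/-- The Gram matrix of a triple of vectors. -/
def gram3 {L : Type*} [AddCommGroup L] [Module ℤ L]
    (B : L →ₗ[ℤ] L →ₗ[ℤ] ℤ) (x y z : L) : Matrix (Fin 3) (Fin 3) ℤ :=
  !![B x x, B x y, B x z; B y x, B y y, B y z; B z x, B z y, B z z]

noncomputable def qf {m : ℕ} (x y : Fin (m+1) → ℝ) : ℝ :=
  ∑ i, (if i = 0 then (1:ℝ) else -1) * (x i * y i)

lemma qf_split {m : ℕ} (x y : Fin (m+1) → ℝ) :
    qf x y = x 0 * y 0 - ∑ i : Fin m, x i.succ * y i.succ := by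
  rw [qf, Fin.sum_univ_succ]
  simp [Fin.succ_ne_zero, sub_eq_add_neg, Finset.sum_neg_distrib]

lemma qf_lorentz {m : ℕ} {H W : Fin (m+1) → ℝ} (hH : 0 < qf H H) (hHW : qf H W = 0) :
    qf W W ≤ 0 ∧ (qf W W = 0 → W = 0) := by
  rw [qf_split] at hH hHW ⊢
  have WWnn : (0:ℝ) ≤ ∑ i : Fin m, W i.succ * W i.succ :=
    Finset.sum_nonneg fun i _ => mul_self_nonneg _
  have HHnn : (0:ℝ) ≤ ∑ i : Fin m, H i.succ * H i.succ :=
    Finset.sum_nonneg fun i _ => mul_self_nonneg _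
  have cs := Finset.sum_mul_sq_le_sq_mul_sq Finset.univ (fun i : Fin m => H i.succ)
    (fun i : Fin m => W i.succ)
  simp only [pow_two] at cs
  have hH0 : 0 < H 0 * H 0 := by nlinarith
  have e : H 0 * W 0 = ∑ i : Fin m, H i.succ * W i.succ := by linarith
  have cs2 : (H 0 * W 0) * (H 0 * W 0) ≤
      (∑ i : Fin m, H i.succ * H i.succ) * ∑ i : Fin m, W i.succ * W i.succ := by
    rw [e]; exact cs
  have key : (H 0 * H 0) * (W 0 * W 0) ≤
      (H 0 * H 0) * ∑ i : Fin m, W i.succ * W i.succ := by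
    calc (H 0 * H 0) * (W 0 * W 0) = (H 0 * W 0) * (H 0 * W 0) := by ring
      _ ≤ (∑ i : Fin m, H i.succ * H i.succ) * ∑ i : Fin m, W i.succ * W i.succ := cs2
      _ ≤ (H 0 * H 0) * ∑ i : Fin m, W i.succ * W i.succ :=
          mul_le_mul_of_nonneg_right (by linarith) WWnn
  have main : W 0 * W 0 ≤ ∑ i : Fin m, W i.succ * W i.succ := le_of_mul_le_mul_left key hH0
  refine ⟨by linarith, fun hWz => ?_⟩
  have hWW0 : (∑ i : Fin m, W i.succ * W i.succ) = 0 := by nlinarith [cs2]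
  have hsucc : ∀ i : Fin m, W i.succ = 0 := by
    intro i
    have := (Finset.sum_eq_zero_iff_of_nonneg
      (fun j _ => mul_self_nonneg (W j.succ))).1 hWW0 i (Finset.mem_univ i)
    exact mul_self_eq_zero.1 this
  have hW0 : W 0 = 0 := mul_self_eq_zero.1 (by linarith)
  funext i
  refine Fin.cases ?_ ?_ i
  · exact hW0
  · exact hsucc

lemma sig_coords {L : Type*} [AddCommGroup L] [Module ℤ L] {n : ℕ}
    (B : L →ₗ[ℤ] L →ₗ[ℤ] ℤ) (hsig : HasSigOneN B n) :
    ∃ c : L → (Fin (n+1) → ℝ), (∀ x, c x = 0 → x = 0) ∧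
      ∀ x y, ((B x y : ℤ) : ℝ) = qf (c x) (c y) := by
  obtain ⟨b, P, hP, hPAP⟩ := hsig
  set A : Matrix (Fin (n+1)) (Fin (n+1)) ℝ :=
    Matrix.of fun i j => ((B (b i) (b j) : ℤ) : ℝ) with hA
  set rep : L → (Fin (n+1) → ℝ) := fun x i => ((b.repr x i : ℤ) : ℝ) with hrepdef
  refine ⟨fun x => P⁻¹ *ᵥ rep x, ?_, ?_⟩
  · intro x hx
    have hx' : P⁻¹ *ᵥ rep x = 0 := hx
    have h1 : rep x = 0 := by
      have h2 : P *ᵥ (P⁻¹ *ᵥ rep x) = P *ᵥ 0 := by rw [hx']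
      rwa [Matrix.mulVec_mulVec, Matrix.mul_nonsing_inv P hP, Matrix.one_mulVec,
        Matrix.mulVec_zero] at h2
    apply b.repr.injective
    ext i
    have h3 := congrFun h1 i
    simp only [hrepdef, Pi.zero_apply] at h3
    simp only [map_zero, Finsupp.coe_zero, Pi.zero_apply]
    exact_mod_cast h3
  · intro x y
    have h1 : ∀ z : L, B x z = ∑ i, b.repr x i * B (b i) z := by
      intro z
      conv_lhs => rw [← b.sum_repr x]
      simp only [map_sum, _root_.map_smul, LinearMap.sum_apply, LinearMap.smul_apply,
        smul_eq_mul]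
    have h2 : ∀ i, B (b i) y = ∑ j, b.repr y j * B (b i) (b j) := by
      intro i
      conv_lhs => rw [← b.sum_repr y]
      simp only [map_sum, _root_.map_smul, smul_eq_mul]
    have hexp : B x y = ∑ i, ∑ j, b.repr x i * (B (b i) (b j) * b.repr y j) := by
      rw [h1]
      refine Finset.sum_congr rfl fun i _ => ?_
      rw [h2, Finset.mul_sum]
      refine Finset.sum_congr rfl fun j _ => ?_
      ring
    have hdot : ((B x y : ℤ) : ℝ) = rep x ⬝ᵥ (A *ᵥ rep y) := by
      rw [hexp]
      push_cast
      simp only [dotProduct, Matrix.mulVec, hrepdef, hA, Matrix.of_apply,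
        Finset.mul_sum]
    show ((B x y : ℤ) : ℝ) = qf (P⁻¹ *ᵥ rep x) (P⁻¹ *ᵥ rep y)
    set cx := P⁻¹ *ᵥ rep x with hcx
    set cy := P⁻¹ *ᵥ rep y with hcy
    have hrx : rep x = P *ᵥ cx := by
      rw [hcx, Matrix.mulVec_mulVec, Matrix.mul_nonsing_inv P hP, Matrix.one_mulVec]
    have hry : rep y = P *ᵥ cy := by
      rw [hcy, Matrix.mulVec_mulVec, Matrix.mul_nonsing_inv P hP, Matrix.one_mulVec]
    clear_value cx cy
    rw [hdot, hrx, hry]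
    calc (P *ᵥ cx) ⬝ᵥ (A *ᵥ (P *ᵥ cy))
        = (P *ᵥ cx) ⬝ᵥ ((A * P) *ᵥ cy) := by rw [Matrix.mulVec_mulVec]
      _ = ((P *ᵥ cx) ᵥ* (A * P)) ⬝ᵥ cy := dotProduct_mulVec _ _ _
      _ = ((cx ᵥ* Pᵀ) ᵥ* (A * P)) ⬝ᵥ cy := by rw [Matrix.vecMul_transpose]
      _ = (cx ᵥ* (Pᵀ * (A * P))) ⬝ᵥ cy := by rw [Matrix.vecMul_vecMul]
      _ = (cx ᵥ* (Pᵀ * A * P)) ⬝ᵥ cy := by rw [Matrix.mul_assoc]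
      _ = (cx ᵥ* Matrix.diagonal (fun i => if i = 0 then (1:ℝ) else -1)) ⬝ᵥ cy := by
          rw [hPAP]
      _ = qf cx cy := by
          rw [qf]
          simp only [dotProduct, Matrix.vecMul_diagonal]
          refine Finset.sum_congr rfl fun i _ => ?_
          ring

theorem stmt0 {L : Type*} [AddCommGroup L] [Module ℤ L]
    (n : ℕ) (B : L →ₗ[ℤ] L →ₗ[ℤ] ℤ)
    (hB : IsSymmBilin B) (hsig : HasSigOneN B n)
    (h u v : L) (hh : 0 < B h h) :
    0 ≤ (gram3 B h u v).det ∧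
      ((gram3 B h u v).det = 0 ↔
        ∃ a b c : ℤ, ¬(a = 0 ∧ b = 0 ∧ c = 0) ∧ a • h + b • u + c • v = 0) := by
  obtain ⟨c, hcinj, hcast⟩ := sig_coords B hsig
  have qh : 0 < qf (c h) (c h) := by
    rw [← hcast]; exact_mod_cast hh
  -- basic consequences of the signature
  have nonpos : ∀ w : L, B h w = 0 → B w w ≤ 0 := by
    intro w hw
    have h1 : qf (c h) (c w) = 0 := by rw [← hcast, hw]; simp
    have h2 := (qf_lorentz qh h1).1
    rw [← hcast] at h2
    exact_mod_cast h2
  have zero : ∀ w : L, B h w = 0 → B w w = 0 → w = 0 := by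
    intro w hw hww
    have h1 : qf (c h) (c w) = 0 := by rw [← hcast, hw]; simp
    have h2 : qf (c w) (c w) = 0 := by rw [← hcast, hww]; simp
    exact hcinj w ((qf_lorentz qh h1).2 h2)
  -- Cauchy–Schwarz on the orthogonal complement of h
  have cs : ∀ w₁ w₂ : L, B h w₁ = 0 → B h w₂ = 0 →
      B w₁ w₂ * B w₁ w₂ ≤ B w₁ w₁ * B w₂ w₂ := by
    intro w₁ w₂ h1 h2
    rcases eq_or_lt_of_le (nonpos w₁ h1) with he | hlt
    · have hz : w₁ = 0 := zero w₁ h1 he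
      subst hz
      simp
    · set x := (B w₁ w₁) • w₂ - (B w₁ w₂) • w₁ with hxdef
      have hx : B h x = 0 := by
        simp [hxdef, map_sub, map_zsmul, LinearMap.sub_apply, LinearMap.smul_apply, smul_eq_mul, h1, h2]
      have hxx : B x x ≤ 0 := nonpos x hx
      have hexp : B x x = B w₁ w₁ * (B w₁ w₁ * B w₂ w₂ - B w₁ w₂ * B w₁ w₂) := by
        simp only [hxdef, map_sub, map_zsmul,
          LinearMap.sub_apply, LinearMap.smul_apply, smul_eq_mul]
        rw [hB w₂ w₁]
        ring
      nlinarith [hlt, hxx, hexp]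
  -- abbreviations
  set a := B h h with ha
  set p := B h u with hp
  set r := B h v with hr
  set u' := a • u - p • h with hu'def
  set v' := a • v - r • h with hv'def
  have hu' : B h u' = 0 := by
    simp only [hu'def, map_sub, map_zsmul,
      LinearMap.sub_apply, LinearMap.smul_apply, smul_eq_mul]
    ring
  have hv' : B h v' = 0 := by
    simp only [hv'def, map_sub, map_zsmul,
      LinearMap.sub_apply, LinearMap.smul_apply, smul_eq_mul]
    ring
  have hcs := cs u' v' hu' hv'
  have e1 : B u' u' = a * (a * B u u - p * p) := by
    simp only [hu'def, map_sub, map_zsmul, LinearMap.sub_apply,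
      LinearMap.smul_apply, smul_eq_mul]
    rw [hB u h]
    ring
  have e2 : B v' v' = a * (a * B v v - r * r) := by
    simp only [hv'def, map_sub, map_zsmul, LinearMap.sub_apply,
      LinearMap.smul_apply, smul_eq_mul]
    rw [hB v h]
    ring
  have e3 : B u' v' = a * (a * B u v - p * r) := by
    simp only [hu'def, hv'def, map_sub, map_zsmul, LinearMap.sub_apply,
      LinearMap.smul_apply, smul_eq_mul]
    rw [hB u h]
    ring
  have hdet : (gram3 B h u v).det =
      a * (B u u * B v v) - a * (B u v * B u v) - p * p * B v v
        + 2 * (p * r * B u v) - r * r * B u u := by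
    rw [gram3, Matrix.det_fin_three]
    simp only [Matrix.cons_val', Matrix.cons_val_zero, Matrix.cons_val_one, Matrix.head_cons,
      Matrix.empty_val', Matrix.cons_val_fin_one, Matrix.head_fin_const, Matrix.cons_val_two,
      Matrix.tail_cons, Matrix.of_apply]
    rw [hB u h, hB v h, hB v u, ← ha, ← hp, ← hr]
    ring
  have key : a * a * a * (gram3 B h u v).det
      = B u' u' * B v' v' - B u' v' * B u' v' := by
    rw [hdet, e1, e2, e3]
    ring
  have det_nonneg : 0 ≤ (gram3 B h u v).det := by
    have h3 : 0 < a * a * a := by positivity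
    nlinarith [key, hcs]
  refine ⟨det_nonneg, ?_, ?_⟩
  · intro hd
    obtain ⟨w, hw0, hker⟩ := (Matrix.exists_mulVec_eq_zero_iff).2 hd
    refine ⟨w 0, w 1, w 2, ?_, ?_⟩
    · rintro ⟨h0, h1, h2⟩
      apply hw0
      funext i
      fin_cases i <;> assumption
    · set z := w 0 • h + w 1 • u + w 2 • v with hzdef
      have bw : ∀ x : L, B x z = w 0 * B x h + w 1 * B x u + w 2 * B x v := by
        intro x
        simp only [hzdef, map_add, map_zsmul, smul_eq_mul]
      have k0 := congrFun hker 0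
      have k1 := congrFun hker 1
      have k2 := congrFun hker 2
      simp only [gram3, Matrix.mulVec, dotProduct, Fin.sum_univ_three,
        Matrix.cons_val', Matrix.cons_val_zero, Matrix.cons_val_one, Matrix.head_cons,
        Matrix.empty_val', Matrix.cons_val_fin_one, Matrix.head_fin_const,
        Matrix.cons_val_two, Matrix.tail_cons, Matrix.of_apply, Pi.zero_apply] at k0 k1 k2
    -- k0 : B h h * w 0 + B h u * w 1 + B h v * w 2 = 0, etc.
      have bhz : B h z = 0 := by rw [bw]; linear_combination k0
      have buz : B u z = 0 := by rw [bw]; linear_combination k1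
      have bvz : B v z = 0 := by rw [bw]; linear_combination k2
      have bzz : B z z = 0 := by
        rw [bw, hB z h, hB z u, hB z v, bhz, buz, bvz]
        ring
      exact zero z bhz bzz
  · rintro ⟨a', b', c', hne, hzero⟩
    apply (Matrix.exists_mulVec_eq_zero_iff).1
    refine ⟨![a', b', c'], ?_, ?_⟩
    · intro heq
      apply hne
      refine ⟨congrFun heq 0, congrFun heq 1, congrFun heq 2⟩
    · have hx : ∀ x : L, a' * B x h + b' * B x u + c' * B x v = 0 := by
        intro x
        have := congrArg (B x) hzero
        simp only [map_add, map_zsmul, LinearMap.add_apply,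
          LinearMap.smul_apply, smul_eq_mul, map_zero, LinearMap.zero_apply] at this
        linear_combination this
      funext i
      fin_cases i <;>
        simp [gram3, Matrix.mulVec, dotProduct, Fin.sum_univ_three]
      · linear_combination hx h
      · linear_combination hx u
      · linear_combination hx v
end

section
/- Let L be a nondegenerate integral lattice of signature (1,n), h ∈ L with h² = 2d ≥ 4, and let l₁ ≠ l₂ be two vectors with l₁² = l₂² = −2, l₁·h = l₂·h = 1, and l₁·l₂ ≥ 0. Then l₁·l₂ ≤ 2. Moreover, if l₁·l₂ = 2, then the vector e := l₁ + l₂ satisfies e² = 0 and e·h = 2. -/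
open Matrix

/-- Auxiliary bilinear form of signature `(1,n)` on `ℝ^{n+1}`. -/
def Qaux {m : ℕ} (u v : Fin (m + 1) → ℝ) : ℝ :=
  ∑ i, (if i = 0 then (1 : ℝ) else -1) * u i * v i

lemma Qaux_sub_left {m : ℕ} (u v w : Fin (m + 1) → ℝ) :
    Qaux (u - v) w = Qaux u w - Qaux v w := by
  simp only [Qaux, ← Finset.sum_sub_distrib]
  exact Finset.sum_congr rfl fun i _ => by simp only [Pi.sub_apply]; ring

lemma Qaux_smul_left {m : ℕ} (c : ℝ) (u w : Fin (m + 1) → ℝ) :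
    Qaux (c • u) w = c * Qaux u w := by
  simp only [Qaux, Finset.mul_sum]
  exact Finset.sum_congr rfl fun i _ => by simp only [Pi.smul_apply, smul_eq_mul]; ring

lemma Qaux_symm {m : ℕ} (u v : Fin (m + 1) → ℝ) : Qaux u v = Qaux v u := by
  simp only [Qaux]
  exact Finset.sum_congr rfl fun i _ => by ring

lemma Qaux_sub_right {m : ℕ} (u v w : Fin (m + 1) → ℝ) :
    Qaux w (u - v) = Qaux w u - Qaux w v := by
  rw [Qaux_symm, Qaux_sub_left, Qaux_symm u w, Qaux_symm v w]

lemma Qaux_smul_right {m : ℕ} (c : ℝ) (u w : Fin (m + 1) → ℝ) :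
    Qaux w (c • u) = c * Qaux w u := by
  rw [Qaux_symm, Qaux_smul_left, Qaux_symm]

/-- On the orthogonal complement of a positive vector, `Qaux` is nonpositive. -/
lemma Qaux_neg_of_orth {m : ℕ} (a y : Fin (m + 1) → ℝ)
    (ha : 0 < Qaux a a) (hy : Qaux a y = 0) : Qaux y y ≤ 0 := by
  classical
  set s : Finset (Fin (m + 1)) := Finset.univ.erase 0 with hs
  have split : ∀ u v : Fin (m + 1) → ℝ,
      Qaux u v = u 0 * v 0 - ∑ i ∈ s, u i * v i := by
    intro u v
    rw [Qaux, ← Finset.sum_erase_add Finset.univ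
      (fun i => (if i = 0 then (1 : ℝ) else -1) * u i * v i) (Finset.mem_univ 0)]
    have hrest : ∑ i ∈ Finset.univ.erase 0,
        (if i = 0 then (1 : ℝ) else -1) * u i * v i
        = -∑ i ∈ Finset.univ.erase 0, u i * v i := by
      rw [← Finset.sum_neg_distrib]
      refine Finset.sum_congr rfl fun i hi => ?_
      rw [if_neg (Finset.mem_erase.mp hi).1]; ring
    simp only [hrest, if_pos rfl, hs, if_true]
    ring
  have hCS := Finset.sum_mul_sq_le_sq_mul_sq s a y
  have hSaa : (0:ℝ) ≤ ∑ i ∈ s, a i ^ 2 := Finset.sum_nonneg fun i _ => sq_nonneg _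
  have hSyy : (0:ℝ) ≤ ∑ i ∈ s, y i ^ 2 := Finset.sum_nonneg fun i _ => sq_nonneg _
  have h1 := split a a
  have h2 := split a y
  have h3 := split y y
  have ha2 : ∀ u : Fin (m+1) → ℝ, ∑ i ∈ s, u i * u i = ∑ i ∈ s, u i ^ 2 :=
    fun u => Finset.sum_congr rfl fun i _ => (sq (u i)).symm
  rw [ha2] at h1 h3
  have ha0 : 0 < a 0 * a 0 := by nlinarith [h1, ha, hSaa]
  have e : a 0 * y 0 = ∑ i ∈ s, a i * y i := by
    rw [hy] at h2; linarith
  have e2 : (a 0 * y 0) ^ 2 = (∑ i ∈ s, a i * y i) ^ 2 := by rw [e]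
  have h1s : Qaux a a * (∑ i ∈ s, y i ^ 2) + (∑ i ∈ s, a i ^ 2) * (∑ i ∈ s, y i ^ 2)
      = (a 0 * a 0) * (∑ i ∈ s, y i ^ 2) := by rw [h1]; ring
  have key : (a 0 * a 0) * (y 0 * y 0 - ∑ i ∈ s, y i ^ 2) ≤ 0 := by
    nlinarith [hCS, e2, h1s, mul_nonneg (le_of_lt ha) hSyy]
  rw [h3]
  nlinarith [key, ha0]

set_option maxHeartbeats 1000000 in
theorem stmt1 {L : Type*} [AddCommGroup L] [Module ℤ L]
    (n : ℕ) (B : L →ₗ[ℤ] L →ₗ[ℤ] ℤ)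
    (hB : IsSymmBilin B) (hsig : HasSigOneN B n)
    (h : L) (d : ℤ) (hd : 2 ≤ d) (hh : B h h = 2 * d)
    (l₁ l₂ : L) (hne : l₁ ≠ l₂)
    (hl₁ : B l₁ l₁ = -2) (hl₂ : B l₂ l₂ = -2)
    (hl₁h : B l₁ h = 1) (hl₂h : B l₂ h = 1) (hpos : 0 ≤ B l₁ l₂) :
    B l₁ l₂ ≤ 2 ∧
      (B l₁ l₂ = 2 →
        B (l₁ + l₂) (l₁ + l₂) = 0 ∧ B (l₁ + l₂) h = 2) := by
  classical
  constructor
  · -- main bound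
    obtain ⟨b, P, hPdet, hP⟩ := hsig
    haveI : Invertible P := P.invertibleOfIsUnitDet hPdet
    set A : Matrix (Fin (n+1)) (Fin (n+1)) ℝ :=
      Matrix.of fun i j => ((B (b i) (b j) : ℤ) : ℝ) with hA
    set r : L → Fin (n+1) → ℝ := fun x i => ((b.repr x) i : ℝ) with hr
    set φ : L → Fin (n+1) → ℝ := fun x => P⁻¹ *ᵥ (r x) with hφ
    -- Step 1: B in coordinates
    have step1 : ∀ x y : L, ((B x y : ℤ) : ℝ) = r x ⬝ᵥ (A *ᵥ r y) := by
      intro x y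
      have hx : B x y = ∑ i, (b.repr x i) * ∑ j, (b.repr y j) * B (b i) (b j) := by
        conv_lhs => rw [← b.sum_repr x]
        rw [map_sum, LinearMap.sum_apply]
        refine Finset.sum_congr rfl fun i _ => ?_
        rw [LinearMap.map_smul, LinearMap.smul_apply, smul_eq_mul]
        congr 1
        conv_lhs => rw [← b.sum_repr y]
        rw [map_sum]
        exact Finset.sum_congr rfl fun j _ => by rw [LinearMap.map_smul, smul_eq_mul]
      rw [hx]
      push_cast
      simp only [dotProduct, mulVec, dotProduct, hA, hr, Matrix.of_apply]
      refine Finset.sum_congr rfl fun i _ => ?_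
      rw [Finset.mul_sum, Finset.mul_sum]
      exact Finset.sum_congr rfl fun j _ => by ring
    -- Step 2: B equals Qaux of φ
    have step2 : ∀ x y : L, ((B x y : ℤ) : ℝ) = Qaux (φ x) (φ y) := by
      intro x y
      have hQd : Qaux (φ x) (φ y) =
          φ x ⬝ᵥ ((Matrix.diagonal (fun i => if i = 0 then (1:ℝ) else -1)) *ᵥ φ y) := by
        simp only [Qaux, dotProduct, mulVec_diagonal]
        exact Finset.sum_congr rfl fun i _ => by ring
      have key : (Pᵀ * A * P) *ᵥ φ y = Pᵀ *ᵥ (A *ᵥ r y) := by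
        simp only [hφ]
        rw [mulVec_mulVec, mul_assoc (Pᵀ * A) P P⁻¹, Matrix.mul_nonsing_inv _ hPdet,
          mul_one, mulVec_mulVec]
      rw [hQd, ← hP, key, dotProduct_mulVec, vecMul_transpose]
      simp only [hφ]
      rw [mulVec_mulVec, Matrix.mul_nonsing_inv _ hPdet, one_mulVec]
      exact step1 x y
    -- Step 3: the projection argument
    have hd4 : (4:ℝ) ≤ 2*(d:ℝ) := by exact_mod_cast (by linarith : (4:ℤ) ≤ 2*d)
    have hdpos : (0:ℝ) < 2*(d:ℝ) := by linarith
    set c : ℝ := 1/(2*(d:ℝ)) with hc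
    have hcpos : 0 < c := by positivity
    have hc2d : c * (2*(d:ℝ)) = 1 := by
      rw [hc, one_div, inv_mul_cancel₀ (ne_of_gt hdpos)]
    have hcle : c ≤ 1/4 := by
      rw [hc, div_le_div_iff₀ hdpos (by norm_num)]
      linarith
    set a := φ h with ha
    set t : ℤ := B l₁ l₂ with htdef
    have Qaa : Qaux a a = 2*(d:ℝ) := by
      have := step2 h h; rw [hh] at this; push_cast at this; linarith
    have Qa1 : Qaux a (φ l₁) = 1 := by
      have := step2 h l₁; rw [hB h l₁, hl₁h] at this; push_cast at this; linarith
    have Qa2 : Qaux a (φ l₂) = 1 := by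
      have := step2 h l₂; rw [hB h l₂, hl₂h] at this; push_cast at this; linarith
    have Q11 : Qaux (φ l₁) (φ l₁) = -2 := by
      have := step2 l₁ l₁; rw [hl₁] at this; push_cast at this; linarith
    have Q22 : Qaux (φ l₂) (φ l₂) = -2 := by
      have := step2 l₂ l₂; rw [hl₂] at this; push_cast at this; linarith
    have Q12 : Qaux (φ l₁) (φ l₂) = (t:ℝ) := (step2 l₁ l₂).symm
    have Q1a : Qaux (φ l₁) a = 1 := by rw [Qaux_symm]; exact Qa1
    have Q2a : Qaux (φ l₂) a = 1 := by rw [Qaux_symm]; exact Qa2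
    have Q21 : Qaux (φ l₂) (φ l₁) = (t:ℝ) := by rw [Qaux_symm]; exact Q12
    set u := φ l₁ - c • a with hu
    set v := φ l₂ - c • a with hv
    have hQau : Qaux a u = 0 := by
      rw [hu, Qaux_sub_right, Qaux_smul_right, Qa1, Qaa, hc2d]; ring
    have hQav : Qaux a v = 0 := by
      rw [hv, Qaux_sub_right, Qaux_smul_right, Qa2, Qaa, hc2d]; ring
    have hQuu : Qaux u u = -2 - c := by
      rw [hu, Qaux_sub_left, Qaux_sub_right, Qaux_sub_right, Qaux_smul_left,
        Qaux_smul_right, Qaux_smul_right, Qaux_smul_left, Q11, Q1a, Qa1, Qaa]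
      linear_combination c * hc2d
    have hQvv : Qaux v v = -2 - c := by
      rw [hv, Qaux_sub_left, Qaux_sub_right, Qaux_sub_right, Qaux_smul_left,
        Qaux_smul_right, Qaux_smul_right, Qaux_smul_left, Q22, Q2a, Qa2, Qaa]
      linear_combination c * hc2d
    have hQuv : Qaux u v = (t:ℝ) - c := by
      rw [hu, hv, Qaux_sub_left, Qaux_sub_right, Qaux_sub_right, Qaux_smul_left,
        Qaux_smul_right, Qaux_smul_right, Qaux_smul_left, Q12, Q1a, Qa2, Qaa]
      linear_combination c * hc2d
    have hQvu : Qaux v u = (t:ℝ) - c := by rw [Qaux_symm]; exact hQuv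
    set y := (-2 - c) • u - ((t:ℝ) - c) • v with hy
    have hQay : Qaux a y = 0 := by
      rw [hy, Qaux_sub_right, Qaux_smul_right, Qaux_smul_right, hQau, hQav]; ring
    have hyy : Qaux y y ≤ 0 :=
      Qaux_neg_of_orth a y (by rw [Qaa]; linarith) hQay
    have hyyval : Qaux y y = (-2 - c) * ((-2 - c)^2 - ((t:ℝ) - c)^2) := by
      simp only [hy, Qaux_sub_left, Qaux_sub_right, Qaux_smul_left, Qaux_smul_right,
        hQuu, hQvv, hQuv, hQvu]
      ring
    rw [hyyval] at hyy
    have htr : (0:ℝ) ≤ (t:ℝ) := by exact_mod_cast hpos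
    have : (t:ℝ) < 3 := by nlinarith
    have ht3 : t < 3 := by exact_mod_cast this
    omega
  · intro ht
    have hsym := hB l₂ l₁
    have e1 : B (l₁ + l₂) (l₁ + l₂) = B l₁ l₁ + B l₁ l₂ + (B l₂ l₁ + B l₂ l₂) := by
      simp only [map_add, LinearMap.add_apply]; ring
    have e2 : B (l₁ + l₂) h = B l₁ h + B l₂ h := by
      simp only [map_add, LinearMap.add_apply]
    refine ⟨?_, ?_⟩
    · rw [e1, hl₁, hl₂, ht, hsym, ht]; ring
    · rw [e2, hl₁h, hl₂h]; norm_num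
end

section
/- Let L be a nondegenerate integral lattice of signature (1,n), h ∈ L with h² > 0, and m > 0 an integer. Let ι, ῑ ∈ L be two distinct vectors with ι² = ῑ² = 0 and ι·h = ῑ·h = m. Then 1 ≤ ι·ῑ and h²·(ι·ῑ) ≤ 2m². -/
open Matrix

/-- Minkowski-type lemma in coordinates. -/
lemma my_key_aux (n : ℕ) (u w : Fin (n+1) → ℝ)
    (hw : ∑ i : Fin n, w i.succ * w i.succ < w 0 * w 0)
    (huw : u 0 * w 0 = ∑ i : Fin n, u i.succ * w i.succ) :
    u 0 * u 0 ≤ ∑ i : Fin n, u i.succ * u i.succ ∧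
      (u ≠ 0 → u 0 * u 0 < ∑ i : Fin n, u i.succ * u i.succ) := by
  set Su := ∑ i : Fin n, u i.succ * u i.succ with hSu
  set Sw := ∑ i : Fin n, w i.succ * w i.succ with hSw
  have hSu0 : 0 ≤ Su := Finset.sum_nonneg fun i _ => mul_self_nonneg _
  have hSw0 : 0 ≤ Sw := Finset.sum_nonneg fun i _ => mul_self_nonneg _
  have hw0 : 0 < w 0 * w 0 := lt_of_le_of_lt hSw0 hw
  have hcs : (u 0 * w 0)^2 ≤ Su * Sw := by
    rw [huw]
    calc (∑ i : Fin n, u i.succ * w i.succ)^2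
        ≤ (∑ i : Fin n, (u i.succ)^2) * (∑ i : Fin n, (w i.succ)^2) :=
          Finset.sum_mul_sq_le_sq_mul_sq _ _ _
      _ = Su * Sw := by rw [hSu, hSw]; congr 1 <;> exact Finset.sum_congr rfl (by intros; ring)
  rcases eq_or_lt_of_le hSu0 with hz | hpos
  · -- Su = 0
    rw [← hz, zero_mul] at hcs
    have hw0' : w 0 ≠ 0 := fun e => by rw [e, mul_zero] at hw0; exact lt_irrefl _ hw0
    have huw0 : u 0 * w 0 = 0 := by
      have := le_antisymm hcs (sq_nonneg (u 0 * w 0))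
      exact (pow_eq_zero_iff two_ne_zero).mp this
    have hu0 : u 0 = 0 := by
      rcases mul_eq_zero.mp huw0 with h' | h'
      · exact h'
      · exact absurd h' hw0'
    constructor
    · rw [hu0, mul_zero, ← hz]
    · intro hune
      exfalso
      apply hune
      have hiff := Finset.sum_eq_zero_iff_of_nonneg
        (fun i (_ : i ∈ (Finset.univ : Finset (Fin n))) => mul_self_nonneg (u i.succ))
      have hall := hiff.mp hz.symm
      funext j
      refine Fin.cases ?_ (fun i => ?_) j
      · exact hu0
      · exact mul_self_eq_zero.mp (hall i (Finset.mem_univ i))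
  · have hstrict : u 0 * u 0 < Su := by nlinarith
    exact ⟨le_of_lt hstrict, fun _ => hstrict⟩

/-- Negativity on the orthogonal complement of `h`. -/
lemma my_neg_perp {L : Type*} [AddCommGroup L] [Module ℤ L]
    (n : ℕ) (B : L →ₗ[ℤ] L →ₗ[ℤ] ℤ) (hsig : HasSigOneN B n)
    (h : L) (hh : 0 < B h h) :
    ∀ x : L, B x h = 0 → B x x ≤ 0 ∧ (x ≠ 0 → B x x < 0) := by
  obtain ⟨b, P, hP, hD⟩ := hsig
  set G : Matrix (Fin (n+1)) (Fin (n+1)) ℝ :=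
    Matrix.of fun i j => ((B (b i) (b j) : ℤ) : ℝ) with hG
  set d : Fin (n+1) → ℝ := fun i => if i = 0 then (1:ℝ) else -1 with hd
  set c : L → Fin (n+1) → ℝ := fun x i => ((b.repr x i : ℤ) : ℝ) with hc
  set φ : L → Fin (n+1) → ℝ := fun x => P⁻¹ *ᵥ c x with hφ
  have claimA : ∀ x y : L, ((B x y : ℤ) : ℝ) = c x ⬝ᵥ (G *ᵥ c y) := by
    intro x y
    have hz : B x y = ∑ i, b.repr x i * ∑ j, b.repr y j * B (b i) (b j) := by
      conv_lhs => rw [← b.sum_repr x, ← b.sum_repr y]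
      simp [map_sum, Finset.mul_sum, mul_assoc, -Module.Basis.sum_repr]
      rw [Finset.sum_comm]
      exact Finset.sum_congr rfl fun i _ => Finset.sum_congr rfl fun j _ => by ring
    rw [hz]
    simp only [dotProduct, Matrix.mulVec, dotProduct, hc, hG, Matrix.of_apply]
    push_cast
    refine Finset.sum_congr rfl fun i _ => ?_
    rw [Finset.mul_sum, Finset.mul_sum]
    exact Finset.sum_congr rfl fun j _ => by ring
  have claimB : ∀ x y : L, c x ⬝ᵥ (G *ᵥ c y) = φ x ⬝ᵥ (Matrix.diagonal d *ᵥ φ y) := by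
    intro x y
    have hPinv : Invertible P := P.invertibleOfIsUnitDet hP
    have hPφ : ∀ z : L, P *ᵥ φ z = c z := by
      intro z
      rw [hφ]
      simp only []
      rw [Matrix.mulVec_mulVec, Matrix.mul_nonsing_inv P hP, Matrix.one_mulVec]
    calc c x ⬝ᵥ (G *ᵥ c y)
        = (P *ᵥ φ x) ⬝ᵥ (G *ᵥ (P *ᵥ φ y)) := by rw [hPφ, hPφ]
      _ = (φ x ᵥ* Pᵀ) ⬝ᵥ (G *ᵥ (P *ᵥ φ y)) := by rw [Matrix.vecMul_transpose]
      _ = φ x ⬝ᵥ (Pᵀ *ᵥ (G *ᵥ (P *ᵥ φ y))) := (Matrix.dotProduct_mulVec _ _ _).symm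
      _ = φ x ⬝ᵥ ((Pᵀ * G * P) *ᵥ φ y) := by
          rw [Matrix.mulVec_mulVec, Matrix.mulVec_mulVec, Matrix.mul_assoc]
      _ = φ x ⬝ᵥ (Matrix.diagonal d *ᵥ φ y) := by rw [hD]
  have claimC : ∀ v v' : Fin (n+1) → ℝ,
      v ⬝ᵥ (Matrix.diagonal d *ᵥ v') = v 0 * v' 0 - ∑ i : Fin n, v i.succ * v' i.succ := by
    intro v v'
    simp only [dotProduct, Matrix.mulVec_diagonal]
    rw [Fin.sum_univ_succ]
    simp only [hd, if_pos rfl]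
    rw [sub_eq_add_neg, ← Finset.sum_neg_distrib]
    congr 1
    · ring
    · refine Finset.sum_congr rfl fun i _ => ?_
      rw [if_neg (Fin.succ_ne_zero i)]
      ring
  have hBr : ∀ x y : L, ((B x y : ℤ) : ℝ) =
      φ x 0 * φ y 0 - ∑ i : Fin n, φ x i.succ * φ y i.succ := by
    intro x y; rw [claimA, claimB, claimC]
  have hinj : ∀ x : L, φ x = 0 → x = 0 := by
    intro x hx
    have hPinv : Invertible P := P.invertibleOfIsUnitDet hP
    have hcx : c x = 0 := by
      have : P *ᵥ φ x = P *ᵥ 0 := by rw [hx]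
      rw [hφ] at this
      simp only [] at this
      rwa [Matrix.mulVec_mulVec, Matrix.mul_nonsing_inv P hP, Matrix.one_mulVec,
        Matrix.mulVec_zero] at this
    have hr : b.repr x = 0 := by
      ext i
      have := congrFun hcx i
      simp only [hc, Pi.zero_apply] at this
      exact_mod_cast this
    have := b.repr.map_eq_zero_iff.mp hr
    exact this
  intro x hxh
  have hhR : ∑ i : Fin n, φ h i.succ * φ h i.succ < φ h 0 * φ h 0 := by
    have := hBr h h
    have hpos : (0:ℝ) < ((B h h : ℤ) : ℝ) := by exact_mod_cast hh
    linarith [this ▸ hpos]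
  have hxhR : φ x 0 * φ h 0 = ∑ i : Fin n, φ x i.succ * φ h i.succ := by
    have := hBr x h
    rw [hxh] at this
    push_cast at this
    linarith
  obtain ⟨hle, hlt⟩ := my_key_aux n (φ x) (φ h) hhR hxhR
  constructor
  · have : ((B x x : ℤ) : ℝ) ≤ 0 := by rw [hBr x x]; linarith
    exact_mod_cast this
  · intro hxne
    have hφne : φ x ≠ 0 := fun hc0 => hxne (hinj x hc0)
    have : ((B x x : ℤ) : ℝ) < 0 := by rw [hBr x x]; linarith [hlt hφne]
    exact_mod_cast this

theorem stmt4 {L : Type*} [AddCommGroup L] [Module ℤ L]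
    (n : ℕ) (B : L →ₗ[ℤ] L →ₗ[ℤ] ℤ)
    (hB : IsSymmBilin B) (hsig : HasSigOneN B n)
    (h : L) (hh : 0 < B h h) (m : ℤ) (hm : 0 < m)
    (ι ι' : L) (hne : ι ≠ ι')
    (hι : B ι ι = 0) (hι' : B ι' ι' = 0)
    (hιh : B ι h = m) (hι'h : B ι' h = m) :
    1 ≤ B ι ι' ∧ B h h * B ι ι' ≤ 2 * m ^ 2 := by
  have key := my_neg_perp n B hsig h hh
  set a := B ι ι' with ha
  set d := B h h with hdd
  -- step 1
  have hwh : B (ι - ι') h = 0 := by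
    simp [map_sub, hιh, hι'h]
  have hww : B (ι - ι') (ι - ι') = -(2 * a) := by
    simp [map_sub, hι, hι', ha]
    rw [hB ι' ι]
    ring
  have hwlt := (key _ hwh).2 (sub_ne_zero.mpr hne)
  rw [hww] at hwlt
  have ha1 : 1 ≤ a := by linarith
  refine ⟨ha1, ?_⟩
  -- step 2
  set u := d • (ι + ι') - (2 * m) • h with hu
  have huh : B u h = 0 := by
    simp [hu, map_sub, map_add, LinearMap.map_smul, LinearMap.smul_apply, smul_eq_mul, hιh, hι'h, hdd]
    ring
  have huu : B u u = 2 * d^2 * a - 4 * m^2 * d := by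
    simp [hu, map_sub, map_add, LinearMap.map_smul, LinearMap.smul_apply, smul_eq_mul, hι, hι', hιh, hι'h]
    rw [hB ι' ι, hB h ι, hB h ι']
    rw [hιh, hι'h, ← ha, ← hdd]
    ring
  have hule := (key u huh).1
  rw [huu] at hule
  nlinarith [hh, hule, ha1]
end

section
/- Let L be a nondegenerate integral lattice of signature (1,n), h ∈ L with h² = 8, and ι ∈ L with ι² = 0 and ι·h = 3. If l ∈ L satisfies l² = −2, l·h = 1, and l·ι ≥ 0, then l·ι ≤ 1. -/
open Matrix

/-- In the Minkowski form `diag(1, -1, …, -1)`, a vector orthogonal to a vector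
of positive norm has nonpositive norm. -/
lemma mink_semidef' {n : ℕ} (f g : Fin (n + 1) → ℝ)
    (hf : 0 < ∑ i, (if i = 0 then (1:ℝ) else -1) * f i * f i)
    (hfg : ∑ i, (if i = 0 then (1:ℝ) else -1) * f i * g i = 0) :
    ∑ i, (if i = 0 then (1:ℝ) else -1) * g i * g i ≤ 0 := by
  simp only [Fin.sum_univ_succ, if_pos, Fin.succ_ne_zero, if_neg, one_mul, neg_one_mul,
    neg_mul, Finset.sum_neg_distrib, if_true, if_false, ite_true, ite_false] at hf hfg ⊢
  have hcs : (∑ i : Fin n, f i.succ * g i.succ) ^ 2 ≤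
      (∑ i : Fin n, f i.succ * f i.succ) * ∑ i : Fin n, g i.succ * g i.succ := by
    have := Finset.sum_mul_sq_le_sq_mul_sq Finset.univ
      (fun i : Fin n => f i.succ) (fun i => g i.succ)
    simpa [pow_two] using this
  have hgg : 0 ≤ ∑ i : Fin n, g i.succ * g i.succ :=
    Finset.sum_nonneg fun i _ => mul_self_nonneg _
  have hff : 0 ≤ ∑ i : Fin n, f i.succ * f i.succ :=
    Finset.sum_nonneg fun i _ => mul_self_nonneg _
  by_contra hcon
  push_neg at hcon
  set Sff := ∑ i : Fin n, f i.succ * f i.succ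
  set Sgg := ∑ i : Fin n, g i.succ * g i.succ
  set Sfg := ∑ i : Fin n, f i.succ * g i.succ
  have h1 : 0 < f 0 * f 0 - Sff := by linarith
  have h2 : 0 < g 0 * g 0 - Sgg := by linarith
  have h3 : f 0 * g 0 = Sfg := by linarith
  have h4 : (f 0 * g 0) ^ 2 ≤ Sff * Sgg := by rw [h3]; exact hcs
  nlinarith [mul_pos h1 h2, h4, mul_nonneg hff (le_of_lt h2), mul_nonneg hgg (le_of_lt h1)]

/-- Expansion of `B x y` in terms of coordinates and the real Gram matrix. -/
lemma gram_expand' {L : Type*} [AddCommGroup L] [Module ℤ L]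
    (B : L →ₗ[ℤ] L →ₗ[ℤ] ℤ) {m : ℕ} (b : Module.Basis (Fin m) ℤ L) (x y : L) :
    ((B x y : ℤ) : ℝ) = (fun i => ((b.repr x i : ℤ) : ℝ)) ⬝ᵥ
      ((Matrix.of fun i j => ((B (b i) (b j) : ℤ) : ℝ)) *ᵥ
        fun j => ((b.repr y j : ℤ) : ℝ)) := by
  conv_lhs => rw [← b.sum_repr x, ← b.sum_repr y]
  simp [-Module.Basis.sum_repr, dotProduct, Matrix.mulVec, map_sum, Finset.sum_apply, Finset.mul_sum, smul_eq_mul]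
  push_cast
  rw [Finset.sum_comm]
  apply Finset.sum_congr rfl
  intro i _
  apply Finset.sum_congr rfl
  intro j _
  ring

/-- Diagonalization of the real extension of `B`. -/
lemma diag_form' {L : Type*} [AddCommGroup L] [Module ℤ L]
    (B : L →ₗ[ℤ] L →ₗ[ℤ] ℤ) {n : ℕ} (b : Module.Basis (Fin (n + 1)) ℤ L)
    (P : Matrix (Fin (n + 1)) (Fin (n + 1)) ℝ) (hdet : IsUnit P.det)
    (hPAP : P.transpose * (Matrix.of fun i j => ((B (b i) (b j) : ℤ) : ℝ)) * P =
        Matrix.diagonal (fun i => if i = 0 then (1 : ℝ) else -1)) (x y : L) :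
    ((B x y : ℤ) : ℝ) = ∑ i, (if i = 0 then (1:ℝ) else -1) *
      (P⁻¹ *ᵥ fun j => ((b.repr x j : ℤ) : ℝ)) i *
      (P⁻¹ *ᵥ fun j => ((b.repr y j : ℤ) : ℝ)) i := by
  set A := (Matrix.of fun i j => ((B (b i) (b j) : ℤ) : ℝ)) with hAdef
  set D := Matrix.diagonal (fun i : Fin (n+1) => if i = 0 then (1 : ℝ) else -1) with hD
  have hdetT : IsUnit Pᵀ.det := by rwa [Matrix.det_transpose]
  have hA : (P⁻¹)ᵀ * D * P⁻¹ = A := by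
    rw [← hPAP]
    rw [Matrix.transpose_nonsing_inv]
    calc Pᵀ⁻¹ * (Pᵀ * A * P) * P⁻¹ = (Pᵀ⁻¹ * Pᵀ) * A * (P * P⁻¹) := by
          simp only [Matrix.mul_assoc]
      _ = A := by rw [Matrix.nonsing_inv_mul _ hdetT, Matrix.mul_nonsing_inv _ hdet,
            Matrix.one_mul, Matrix.mul_one]
  set cx := (fun j => ((b.repr x j : ℤ) : ℝ)) with hcx
  set cy := (fun j => ((b.repr y j : ℤ) : ℝ)) with hcy
  have := gram_expand' B b x y
  rw [this, ← hcx, ← hcy, ← hAdef, ← hA]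
  rw [show (P⁻¹)ᵀ * D * P⁻¹ = (P⁻¹)ᵀ * (D * P⁻¹) from by rw [Matrix.mul_assoc]]
  rw [← Matrix.mulVec_mulVec, Matrix.dotProduct_mulVec, Matrix.vecMul_transpose,
    ← Matrix.mulVec_mulVec]
  simp only [dotProduct, Matrix.mulVec_diagonal, hD]
  apply Finset.sum_congr rfl
  intro i _
  ring

theorem stmt6 {L : Type*} [AddCommGroup L] [Module ℤ L]
    (n : ℕ) (B : L →ₗ[ℤ] L →ₗ[ℤ] ℤ)
    (hB : IsSymmBilin B) (hsig : HasSigOneN B n)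
    (h : L) (hh : B h h = 8)
    (ι : L) (hι : B ι ι = 0) (hιh : B ι h = 3)
    (l : L) (hl : B l l = -2) (hlh : B l h = 1) (hpos : 0 ≤ B l ι) :
    B l ι ≤ 1 := by
  obtain ⟨b, P, hdet, hPAP⟩ := hsig
  set a := B l ι with ha
  set U : L := (136:ℤ) • ((8:ℤ) • ι - (3:ℤ) • h) + (64*a - 24) • ((8:ℤ) • l - h) with hU
  have key := fun x y => diag_form' B b P hdet hPAP x y
  -- U is orthogonal to h
  have hBhU : B h U = 0 := by
    simp only [hU, map_zsmul, map_add, map_sub, LinearMap.add_apply,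
      LinearMap.sub_apply, LinearMap.smul_apply, smul_eq_mul]
    rw [hB h ι, hB h l]
    rw [hιh, hlh, hh]
    ring
  -- since `B h h = 8 > 0` and `B h U = 0`, signature `(1, n)` forces `B U U ≤ 0`
  have hUU : B U U ≤ 0 := by
    have hsd := mink_semidef' (P⁻¹ *ᵥ fun j => ((b.repr h j : ℤ) : ℝ))
      (P⁻¹ *ᵥ fun j => ((b.repr U j : ℤ) : ℝ))
      (by rw [← key h h, hh]; norm_num)
      (by rw [← key h U, hBhU]; norm_num)
    rw [← key U U] at hsd
    exact_mod_cast hsd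
  -- expand `B U U` as a polynomial in `a`
  have hexp : B U U = 136 * ((64*a - 24)^2 - 9792) := by
    simp only [hU, map_zsmul, map_add, map_sub, LinearMap.add_apply,
      LinearMap.sub_apply, LinearMap.smul_apply, smul_eq_mul]
    rw [hB ι h, hB ι l, hB h ι, hB h l]
    rw [hι, hιh, hlh, hh, hl, ← ha]
    ring
  rw [hexp] at hUU
  nlinarith [hUU, hpos, sq_nonneg (a - 2)]
end

section
/- Let L be a nondegenerate integral lattice of signature (1,n), h ∈ L with h² > 0, m, n, a positive integers. Suppose ι ∈ L satisfies ι² = 0 and ι·h = m, and r ∈ L satisfies r² = −2, r·h = n, and ι·r = −a. Then a²·h² ≤ 2m(m − an). -/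
open Matrix

noncomputable def mink (d : ℕ) (u v : Fin (d + 1) → ℝ) : ℝ :=
  u 0 * v 0 - ∑ i : Fin d, u i.succ * v i.succ

lemma mink_comm (d : ℕ) (u v : Fin (d+1) → ℝ) : mink d u v = mink d v u := by
  unfold mink; congr 1; · ring
  · exact Finset.sum_congr rfl fun i _ => mul_comm _ _

lemma mink_smul_left (d : ℕ) (c : ℝ) (u v : Fin (d+1) → ℝ) :
    mink d (c • u) v = c * mink d u v := by
  unfold mink
  simp [Finset.mul_sum, mul_sub, mul_assoc]

lemma mink_sub_left (d : ℕ) (u w v : Fin (d+1) → ℝ) :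
    mink d (u - w) v = mink d u v - mink d w v := by
  unfold mink
  simp [sub_mul, Finset.sum_sub_distrib]
  ring

lemma mink_add_left (d : ℕ) (u w v : Fin (d+1) → ℝ) :
    mink d (u + w) v = mink d u v + mink d w v := by
  unfold mink
  simp [add_mul, Finset.sum_add_distrib]
  ring

lemma mink_perp (d : ℕ) (H v : Fin (d+1) → ℝ) (hH : 0 < mink d H H)
    (hv : mink d H v = 0) : mink d v v ≤ 0 := by
  unfold mink at *
  have e1 : ∀ u : Fin (d+1) → ℝ, ∑ i : Fin d, u i.succ * u i.succ = ∑ i : Fin d, u i.succ ^ 2 :=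
    fun u => Finset.sum_congr rfl fun i _ => (sq (u i.succ)).symm
  rw [e1] at hH ⊢
  have cs := Finset.sum_mul_sq_le_sq_mul_sq Finset.univ (fun i : Fin d => H i.succ)
    (fun i : Fin d => v i.succ)
  have hsum : ∑ i : Fin d, H i.succ * v i.succ = H 0 * v 0 := by linarith
  rw [hsum] at cs
  have h1 : (0:ℝ) ≤ ∑ i : Fin d, H i.succ ^ 2 := Finset.sum_nonneg fun i _ => sq_nonneg _
  have h2 : (0:ℝ) ≤ ∑ i : Fin d, v i.succ ^ 2 := Finset.sum_nonneg fun i _ => sq_nonneg _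
  by_contra hcon
  push_neg at hcon
  nlinarith [mul_nonneg h1 h2, mul_pos hH hcon, mul_le_mul_of_nonneg_left (le_of_lt hcon) h1]

lemma mink_smul_right (d : ℕ) (c : ℝ) (u v : Fin (d+1) → ℝ) :
    mink d u (c • v) = c * mink d u v := by
  rw [mink_comm, mink_smul_left, mink_comm]

lemma mink_sub_right (d : ℕ) (u v w : Fin (d+1) → ℝ) :
    mink d u (v - w) = mink d u v - mink d u w := by
  rw [mink_comm, mink_sub_left, mink_comm d v u, mink_comm d w u]

lemma mink_add_right (d : ℕ) (u v w : Fin (d+1) → ℝ) :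
    mink d u (v + w) = mink d u v + mink d u w := by
  rw [mink_comm, mink_add_left, mink_comm d v u, mink_comm d w u]

lemma mink_cs_perp (d : ℕ) (H v w : Fin (d+1) → ℝ) (hH : 0 < mink d H H)
    (hv : mink d H v = 0) (hw : mink d H w = 0) :
    mink d v w ^ 2 ≤ mink d v v * mink d w w := by
  have hvv := mink_perp d H v hH hv
  have hww := mink_perp d H w hH hw
  by_cases h0 : mink d w w = 0
  · have hvw : mink d v w = 0 := by
      by_contra hne
      set t : ℝ := (1 - mink d v v) / (2 * mink d v w) with ht
      have hu : mink d H (v + t • w) = 0 := by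
        simp only [mink_add_right, mink_smul_right, hv, hw]; ring
      have huu := mink_perp d H (v + t • w) hH hu
      have hexp : mink d (v + t • w) (v + t • w)
          = mink d v v + 2 * t * mink d v w := by
        simp only [mink_add_left, mink_add_right, mink_smul_left, mink_smul_right,
          mink_comm d w v, h0]
        ring
      rw [hexp, ht] at huu
      have hkey : 2 * ((1 - mink d v v) / (2 * mink d v w)) * mink d v w
          = 1 - mink d v v := by
        field_simp
      rw [hkey] at huu
      linarith
    rw [hvw, h0]; simp
  · have hwwlt : mink d w w < 0 := lt_of_le_of_ne hww h0
    have hHu : mink d H ((mink d w w) • v - (mink d v w) • w) = 0 := by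
      simp only [mink_sub_right, mink_smul_right, hv, hw]; ring
    have huu := mink_perp d H _ hH hHu
    have hexp : mink d ((mink d w w) • v - (mink d v w) • w)
        ((mink d w w) • v - (mink d v w) • w)
        = mink d w w * (mink d w w * mink d v v - mink d v w ^2) := by
      simp only [mink_sub_left, mink_sub_right, mink_smul_left, mink_smul_right,
        mink_comm d w v]
      ring
    rw [hexp] at huu
    nlinarith [huu, hwwlt]

lemma mink_key (d : ℕ) (H I R : Fin (d+1) → ℝ) (hH : 0 < mink d H H) :
    mink d H H * mink d I R ^ 2 - 2 * mink d H I * mink d H R * mink d I R ≤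
      mink d H H * mink d I I * mink d R R - mink d I I * mink d H R ^ 2
        - mink d H I ^ 2 * mink d R R := by
  set v := (mink d H H) • I - (mink d H I) • H with hv
  set w := (mink d H H) • R - (mink d H R) • H with hw
  have hv0 : mink d H v = 0 := by
    simp only [hv, mink_sub_right, mink_smul_right]; ring
  have hw0 : mink d H w = 0 := by
    simp only [hw, mink_sub_right, mink_smul_right]; ring
  have cs := mink_cs_perp d H v w hH hv0 hw0
  simp only [hv, hw, mink_sub_left, mink_sub_right, mink_smul_left, mink_smul_right,
    mink_comm d I H, mink_comm d R H, mink_comm d R I] at cs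
  set p := mink d H H
  set q := mink d H I
  set s := mink d H R
  set x := mink d I I
  set y := mink d R R
  set z := mink d I R
  have e1 : (p * (p * z - q * s) - s * (p * q - q * p)) ^ 2
      = p ^ 2 * ((p * z - q * s) ^ 2) := by ring
  have e2 : (p * (p * x - q * q) - q * (p * q - q * p)) *
      (p * (p * y - s * s) - s * (p * s - s * p))
      = p ^ 2 * ((p * x - q ^ 2) * (p * y - s ^ 2)) := by ring
  rw [e1, e2] at cs
  have step := le_of_mul_le_mul_left cs (pow_pos hH 2)
  have fin2 : p * (p * z ^ 2 - 2 * q * s * z) ≤ p * (p * x * y - x * s ^ 2 - q ^ 2 * y) := by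
    nlinarith [step]
  exact le_of_mul_le_mul_left fin2 hH


section aux
variable {L : Type*} [AddCommGroup L] [Module ℤ L]

lemma expandB {k : ℕ} (b : Module.Basis (Fin k) ℤ L) (B : L →ₗ[ℤ] L →ₗ[ℤ] ℤ) (x y : L) :
    B x y = ∑ i, ∑ j, b.repr x i * b.repr y j * B (b i) (b j) := by
  conv_lhs => rw [← b.sum_repr x, ← b.sum_repr y]
  simp only [map_sum, LinearMap.sum_apply, _root_.map_smul, LinearMap.map_smul₂, LinearMap.smul_apply, smul_eq_mul, Finset.mul_sum]
  rw [Finset.sum_comm]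
  exact Finset.sum_congr rfl fun i _ => Finset.sum_congr rfl fun j _ => by ring
end aux

lemma dot_diag_mink (k : ℕ) (u v : Fin (k+1) → ℝ) :
    u ⬝ᵥ ((Matrix.diagonal (fun i => if i = 0 then (1:ℝ) else -1)) *ᵥ v) = mink k u v := by
  simp only [dotProduct, Matrix.mulVec_diagonal, mink, Fin.sum_univ_succ,
    Fin.succ_ne_zero, if_true, if_false, ite_true, ite_false, reduceIte]
  simp [Finset.sum_neg_distrib, sub_eq_add_neg]

lemma dot_gram_mink (k : ℕ) (G P : Matrix (Fin (k+1)) (Fin (k+1)) ℝ) (hdet : IsUnit P.det)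
    (hP : Pᵀ * G * P = Matrix.diagonal (fun i => if i = 0 then (1:ℝ) else -1))
    (u v : Fin (k+1) → ℝ) :
    u ⬝ᵥ G *ᵥ v = mink k (P⁻¹ *ᵥ u) (P⁻¹ *ᵥ v) := by
  have h1 : P * P⁻¹ = 1 := Matrix.mul_nonsing_inv P hdet
  have h2 : (P⁻¹)ᵀ * (Pᵀ * G * P) * P⁻¹ = G := by
    rw [show Pᵀ * G * P = Pᵀ * (G * P) from by rw [Matrix.mul_assoc],
      ← Matrix.mul_assoc (P⁻¹)ᵀ Pᵀ (G*P), ← Matrix.transpose_mul, h1, Matrix.transpose_one,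
      Matrix.one_mul, Matrix.mul_assoc, h1, Matrix.mul_one]
  rw [← h2, hP, ← Matrix.mulVec_mulVec, ← Matrix.mulVec_mulVec,
    Matrix.dotProduct_mulVec, Matrix.vecMul_transpose, Matrix.mulVec_mulVec,
    ← Matrix.mulVec_mulVec, dot_diag_mink]

theorem stmt8 {L : Type*} [AddCommGroup L] [Module ℤ L]
    (N : ℕ) (B : L →ₗ[ℤ] L →ₗ[ℤ] ℤ)
    (hB : IsSymmBilin B) (hsig : HasSigOneN B N)
    (h : L) (hh : 0 < B h h)
    (m n a : ℤ) (hm : 0 < m) (hn : 0 < n) (ha : 0 < a)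
    (ι : L) (hι : B ι ι = 0) (hιh : B ι h = m)
    (r : L) (hr : B r r = -2) (hrh : B r h = n) (hιr : B ι r = -a) :
    a ^ 2 * B h h ≤ 2 * m * (m - a * n) := by
  obtain ⟨b, P, hdet, hP⟩ := hsig
  set G : Matrix (Fin (N+1)) (Fin (N+1)) ℝ :=
    Matrix.of fun i j => ((B (b i) (b j) : ℤ) : ℝ) with hG
  set c : L → (Fin (N+1) → ℝ) := fun x i => ((b.repr x i : ℤ) : ℝ) with hc
  have hdot : ∀ x y : L, ((B x y : ℤ) : ℝ) = c x ⬝ᵥ G *ᵥ c y := by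
    intro x y
    rw [expandB b B x y]
    push_cast
    simp only [dotProduct, Matrix.mulVec, hc, hG, Matrix.of_apply, Finset.mul_sum]
    exact Finset.sum_congr rfl fun i _ => Finset.sum_congr rfl fun j _ => by push_cast; ring
  have hmink : ∀ x y : L, ((B x y : ℤ) : ℝ) = mink N (P⁻¹ *ᵥ c x) (P⁻¹ *ᵥ c y) := by
    intro x y
    rw [hdot, dot_gram_mink N G P hdet hP]
  have key := mink_key N (P⁻¹ *ᵥ c h) (P⁻¹ *ᵥ c ι) (P⁻¹ *ᵥ c r) (by
    rw [← hmink h h]; exact_mod_cast hh)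
  rw [← hmink h h, ← hmink h ι, ← hmink h r, ← hmink ι ι, ← hmink r r, ← hmink ι r] at key
  rw [hB h ι, hB h r, hιh, hrh, hι, hr, hιr] at key
  have goalR : (a:ℝ) ^ 2 * ((B h h : ℤ) : ℝ) ≤ 2 * m * (m - a * n) := by
    push_cast at key ⊢
    nlinarith [key]
  exact_mod_cast goalR
end

section
/- There is no nondegenerate integral lattice L of signature (1,n) containing vectors h, ε, v₁, …, v₆ such that h² = 8, ε² = −2, ε·h = 0, vᵢ² = −2, vᵢ·h = 1, ε·vᵢ = 1 for all i, and vᵢ·vⱼ = 0 for all i ≠ j. -/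
open Matrix

/-- Core polynomial infeasibility. -/
private lemma core14 (x y z : ℝ) (hx : 8 ≤ x^2) (hA : 0 ≤ 2*x^2 - 8*y^2)
    (hB : 0 ≤ 12*x^2 + 12*x*z - 8*z^2)
    (hCS : (6*x^2 - 6*x*y + 8*y*z)^2 ≤ (2*x^2 - 8*y^2)*(12*x^2 + 12*x*z - 8*z^2)) :
    False := by
  set A := 2*x^2 - 8*y^2 with hAdef
  set B := 12*x^2 + 12*x*z - 8*z^2 with hBdef
  set S := 6*x^2 - 6*x*y + 8*y*z with hSdef
  have h1 : 139/100*A + 9/50*B + 6/25*x^2 ≤ S := by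
    nlinarith [sq_nonneg (y + 50/139*z - 75/278*x), sq_nonneg (z - 3/4*x), sq_nonneg x]
  have hab : 0 ≤ 139/100*A + 9/50*B := by nlinarith
  have h2 : A*B ≤ (139/100*A + 9/50*B)^2 := by
    nlinarith [sq_nonneg (139/100*A - 9/50*B), mul_nonneg hA hB]
  have h3 : (139/100*A + 9/50*B)^2 ≤ (S - 6/25*x^2)^2 := by
    have h4 : 139/100*A + 9/50*B ≤ S - 6/25*x^2 := by linarith
    nlinarith
  nlinarith [hCS, h2, h3, mul_le_mul_of_nonneg_left h1 (by positivity : (0:ℝ) ≤ x^2)]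

/-- No triple of vectors in Minkowski space `ℝ^{1,n}` can have the prescribed
Gram matrix `[[8,0,6],[0,-2,6],[6,6,-12]]`. -/
private lemma mink14 (n : ℕ) (X Y Z : Fin (n + 1) → ℝ)
    (hXX : ∑ i, (if i = 0 then (1:ℝ) else -1) * (X i * X i) = 8)
    (hXY : ∑ i, (if i = 0 then (1:ℝ) else -1) * (X i * Y i) = 0)
    (hXZ : ∑ i, (if i = 0 then (1:ℝ) else -1) * (X i * Z i) = 6)
    (hYY : ∑ i, (if i = 0 then (1:ℝ) else -1) * (Y i * Y i) = -2)
    (hYZ : ∑ i, (if i = 0 then (1:ℝ) else -1) * (Y i * Z i) = 6)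
    (hZZ : ∑ i, (if i = 0 then (1:ℝ) else -1) * (Z i * Z i) = -12) : False := by
  have split : ∀ u w : Fin (n + 1) → ℝ,
      ∑ i, (if i = 0 then (1:ℝ) else -1) * (u i * w i) =
        u 0 * w 0 - ∑ j : Fin n, u j.succ * w j.succ := by
    intro u w
    rw [Fin.sum_univ_succ, if_pos rfl, one_mul, sub_eq_add_neg, ← Finset.sum_neg_distrib]
    congr 1
    exact Finset.sum_congr rfl fun j _ => by rw [if_neg (Fin.succ_ne_zero j)]; ring
  rw [split] at hXX hXY hXZ hYY hYZ hZZ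
  set x := X 0; set y := Y 0; set z := Z 0
  have eXX : ∑ j : Fin n, X j.succ * X j.succ = x * x - 8 := by linarith
  have eXY : ∑ j : Fin n, X j.succ * Y j.succ = x * y := by linarith
  have eXZ : ∑ j : Fin n, X j.succ * Z j.succ = x * z - 6 := by linarith
  have eYY : ∑ j : Fin n, Y j.succ * Y j.succ = y * y + 2 := by linarith
  have eYZ : ∑ j : Fin n, Y j.succ * Z j.succ = y * z - 6 := by linarith
  have eZZ : ∑ j : Fin n, Z j.succ * Z j.succ = z * z + 12 := by linarith
  have hx : 8 ≤ x ^ 2 := by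
    have h0 : 0 ≤ ∑ j : Fin n, X j.succ * X j.succ :=
      Finset.sum_nonneg fun j _ => mul_self_nonneg _
    nlinarith [h0, eXX]
  set f : Fin n → ℝ := fun j => x * Y j.succ - y * X j.succ with hf
  set g : Fin n → ℝ := fun j => x * Z j.succ - z * X j.succ with hg
  have eA : ∑ j : Fin n, f j ^ 2 = 2*x^2 - 8*y^2 := by
    have e : ∑ j : Fin n, f j ^ 2 =
        x^2 * (∑ j : Fin n, Y j.succ * Y j.succ)
          - 2*x*y * (∑ j : Fin n, X j.succ * Y j.succ)
          + y^2 * (∑ j : Fin n, X j.succ * X j.succ) := by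
      simp only [Finset.mul_sum, ← Finset.sum_add_distrib, ← Finset.sum_sub_distrib]
      exact Finset.sum_congr rfl fun j _ => by simp only [hf]; ring
    rw [e, eYY, eXY, eXX]; ring
  have eB : ∑ j : Fin n, g j ^ 2 = 12*x^2 + 12*x*z - 8*z^2 := by
    have e : ∑ j : Fin n, g j ^ 2 =
        x^2 * (∑ j : Fin n, Z j.succ * Z j.succ)
          - 2*x*z * (∑ j : Fin n, X j.succ * Z j.succ)
          + z^2 * (∑ j : Fin n, X j.succ * X j.succ) := by
      simp only [Finset.mul_sum, ← Finset.sum_add_distrib, ← Finset.sum_sub_distrib]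
      exact Finset.sum_congr rfl fun j _ => by simp only [hg]; ring
    rw [e, eZZ, eXZ, eXX]; ring
  have eS : ∑ j : Fin n, f j * g j = -(6*x^2 - 6*x*y + 8*y*z) := by
    have e : ∑ j : Fin n, f j * g j =
        x^2 * (∑ j : Fin n, Y j.succ * Z j.succ)
          - x*z * (∑ j : Fin n, X j.succ * Y j.succ)
          - x*y * (∑ j : Fin n, X j.succ * Z j.succ)
          + y*z * (∑ j : Fin n, X j.succ * X j.succ) := by
      simp only [Finset.mul_sum, ← Finset.sum_add_distrib, ← Finset.sum_sub_distrib]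
      exact Finset.sum_congr rfl fun j _ => by simp only [hf, hg]; ring
    rw [e, eYZ, eXY, eXZ, eXX]; ring
  have hA : (0:ℝ) ≤ 2*x^2 - 8*y^2 := by
    rw [← eA]; exact Finset.sum_nonneg fun j _ => sq_nonneg _
  have hB : (0:ℝ) ≤ 12*x^2 + 12*x*z - 8*z^2 := by
    rw [← eB]; exact Finset.sum_nonneg fun j _ => sq_nonneg _
  have cs := Finset.sum_mul_sq_le_sq_mul_sq Finset.univ f g
  rw [eA, eB, eS, neg_sq] at cs
  exact core14 x y z hx hA hB cs

theorem stmt14 :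
    ∀ (L : Type) (_ : AddCommGroup L) (_ : Module ℤ L)
      (n : ℕ) (B : L →ₗ[ℤ] L →ₗ[ℤ] ℤ),
      IsSymmBilin B → HasSigOneN B n →
      ∀ (h ε : L) (v : Fin 6 → L),
        B h h = 8 → B ε ε = -2 → B ε h = 0 →
        (∀ i, B (v i) (v i) = -2) → (∀ i, B (v i) h = 1) →
        (∀ i, B ε (v i) = 1) →
        (∀ i j, i ≠ j → B (v i) (v j) = 0) → False := by
  intro L _ _ n B hsym hsig h ε v hhh hεε hεh hvv hvh hεv hvij
  obtain ⟨b, P, hPdet, hPG⟩ := hsig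
  set G : Matrix (Fin (n+1)) (Fin (n+1)) ℝ :=
    Matrix.of fun i j => ((B (b i) (b j) : ℤ) : ℝ) with hG
  set r : L → (Fin (n+1) → ℝ) := fun x i => ((b.repr x i : ℤ) : ℝ) with hr
  set φ : L → (Fin (n+1) → ℝ) := fun x => P⁻¹ *ᵥ (r x) with hφ
  -- Step A : B as a matrix product
  have hBsum : ∀ x y : L, ((B x y : ℤ) : ℝ) = r x ⬝ᵥ (G *ᵥ r y) := by
    intro x y
    have key : B x y = ∑ i, ∑ j, b.repr x i * b.repr y j * B (b i) (b j) := by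
      conv_lhs => rw [← b.sum_repr x, ← b.sum_repr y]
      simp only [map_sum, LinearMap.sum_apply, LinearMap.map_smul, LinearMap.smul_apply,
        smul_eq_mul]
      rw [Finset.sum_comm]
      exact Finset.sum_congr rfl fun i _ => Finset.sum_congr rfl fun j _ => by ring
    rw [key]
    simp only [dotProduct, Matrix.mulVec, Matrix.of_apply, Finset.mul_sum, hG, hr]
    push_cast
    exact Finset.sum_congr rfl fun i _ => Finset.sum_congr rfl fun j _ => by ring
  -- Step B : factor G through the diagonal form
  have hPdetT : IsUnit (Pᵀ).det := by rwa [Matrix.det_transpose]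
  have hGfact : G = (P⁻¹)ᵀ * (Matrix.diagonal (fun i => if i = 0 then (1:ℝ) else -1)) * P⁻¹ := by
    have e1 : (Pᵀ)⁻¹ * (Pᵀ * G * P) * P⁻¹ = G := by
      rw [Matrix.mul_assoc Pᵀ G P, ← Matrix.mul_assoc (Pᵀ)⁻¹ Pᵀ (G * P),
        Matrix.nonsing_inv_mul (Pᵀ) hPdetT, Matrix.one_mul,
        Matrix.mul_assoc G P P⁻¹, Matrix.mul_nonsing_inv P hPdet, Matrix.mul_one]
    rw [← e1, hPG, Matrix.transpose_nonsing_inv]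
  -- Step C : Minkowski form via φ
  have hMink : ∀ x y : L, ((B x y : ℤ) : ℝ) =
      ∑ i, (if i = 0 then (1:ℝ) else -1) * (φ x i * φ y i) := by
    intro x y
    rw [hBsum, hGfact, ← Matrix.mulVec_mulVec, ← Matrix.mulVec_mulVec,
      Matrix.dotProduct_mulVec, Matrix.vecMul_transpose]
    simp only [hφ, dotProduct, Matrix.mulVec_diagonal]
    exact Finset.sum_congr rfl fun i _ => by ring
  -- integer Gram values for h, ε, s
  set s : L := ∑ i, v i with hs
  have hBhs : B h s = 6 := by
    rw [hs, map_sum]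
    have : ∀ i : Fin 6, (B h) (v i) = 1 := fun i => by rw [hsym h (v i)]; exact hvh i
    simp [this]
  have hBεs : B ε s = 6 := by
    rw [hs, map_sum]
    simp [hεv]
  have hBss : B s s = -12 := by
    rw [hs, map_sum]
    have inner : ∀ x : Fin 6, (B (∑ i, v i)) (v x) = -2 := by
      intro x
      rw [map_sum, LinearMap.sum_apply,
        Finset.sum_eq_single x (fun j _ hjx => hvij j x hjx) (by simp)]
      exact hvv x
    simp only [inner]
    norm_num
  -- apply the Minkowski lemma
  refine mink14 n (φ h) (φ ε) (φ s) ?_ ?_ ?_ ?_ ?_ ?_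
  · rw [← hMink h h, hhh]; norm_num
  · rw [← hMink h ε, hsym h ε, hεh]; norm_num
  · rw [← hMink h s, hBhs]; norm_num
  · rw [← hMink ε ε, hεε]; norm_num
  · rw [← hMink ε s, hBεs]; norm_num
  · rw [← hMink s s, hBss]; norm_num
end

section
/- Let L be a nondegenerate integral lattice of signature (1,n) containing h with h² = 8 and sixteen vectors f₁, …, f₁₆ with fᵢ² = −2, fᵢ·h = 1, and fᵢ·fⱼ = 0 for i ≠ j. Suppose ι ∈ L satisfies ι² = 0, ι·h = 3, and ι·fᵢ ∈ {0,1} for each i. Then #{ i : ι·fᵢ = 1 } ≤ 2. -/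
open Matrix Finset

lemma aux_key (n : ℕ) (G P : Matrix (Fin (n+1)) (Fin (n+1)) ℝ) (x y : Fin (n+1) → ℝ) :
    x ⬝ᵥ ((P.transpose * G * P) *ᵥ y) = (P *ᵥ x) ⬝ᵥ (G *ᵥ (P *ᵥ y)) := by
  rw [← Matrix.mulVec_mulVec, ← Matrix.mulVec_mulVec, Matrix.dotProduct_mulVec,
    Matrix.vecMul_transpose]

lemma aux_real (n : ℕ) (G P : Matrix (Fin (n+1)) (Fin (n+1)) ℝ) (hP : IsUnit P.det)
    (hcong : P.transpose * G * P = Matrix.diagonal (fun i => if i = 0 then (1:ℝ) else -1))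
    (u w : Fin (n+1) → ℝ) (hu : 0 < u ⬝ᵥ (G *ᵥ u)) (huw : u ⬝ᵥ (G *ᵥ w) = 0) :
    w ⬝ᵥ (G *ᵥ w) ≤ 0 := by
  set Q := P⁻¹ with hQ
  have hPQ : P * Q = 1 := mul_nonsing_inv P hP
  set a := Q *ᵥ u with ha
  set c := Q *ᵥ w with hc
  have hu' : P *ᵥ a = u := by rw [ha, mulVec_mulVec, hPQ, one_mulVec]
  have hw' : P *ᵥ c = w := by rw [hc, mulVec_mulVec, hPQ, one_mulVec]
  have key : ∀ x y : Fin (n+1) → ℝ,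
      (P *ᵥ x) ⬝ᵥ (G *ᵥ (P *ᵥ y)) = x 0 * y 0 - ∑ i ∈ univ.erase 0, x i * y i := by
    intro x y
    rw [← aux_key n G P x y, hcong]
    simp only [dotProduct, mulVec_diagonal]
    rw [← Finset.add_sum_erase _ _ (Finset.mem_univ (0 : Fin (n+1)))]
    simp only [if_pos rfl]
    rw [sub_eq_add_neg, ← Finset.sum_neg_distrib]
    congr 1
    · simp
    · refine Finset.sum_congr rfl fun i hi => ?_
      rw [if_neg (Finset.ne_of_mem_erase hi)]
      ring
  rw [← hw'] at huw ⊢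
  rw [← hu'] at hu huw
  rw [key] at hu huw ⊢
  set S := ∑ i ∈ univ.erase 0, a i * a i with hS
  set T := ∑ i ∈ univ.erase 0, c i * c i with hT
  set X := ∑ i ∈ univ.erase 0, a i * c i with hX
  have hSnn : 0 ≤ S := Finset.sum_nonneg fun i _ => mul_self_nonneg _
  have hTnn : 0 ≤ T := Finset.sum_nonneg fun i _ => mul_self_nonneg _
  have hcs : X ^ 2 ≤ S * T := by
    have := Finset.sum_mul_sq_le_sq_mul_sq (univ.erase (0 : Fin (n+1))) a c
    simpa [hS, hT, hX, sq] using this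
  have ha0 : 0 < a 0 * a 0 := by nlinarith
  have h1 : S * T ≤ (a 0 * a 0) * T := mul_le_mul_of_nonneg_right (by linarith) hTnn
  have h3 : X ^ 2 = (a 0 * a 0) * (c 0 * c 0) := by
    have : X = a 0 * c 0 := by linarith
    rw [this]; ring
  nlinarith [h1, h3, hcs, ha0]

lemma bilin_repr {L : Type*} [AddCommGroup L] [Module ℤ L] {m : ℕ}
    (B : L →ₗ[ℤ] L →ₗ[ℤ] ℤ) (b : Module.Basis (Fin m) ℤ L) (x y : L) :
    B x y = ∑ i, ∑ j, b.repr x i * b.repr y j * B (b i) (b j) := by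
  conv_lhs => rw [← b.sum_repr x, ← b.sum_repr y]
  simp only [map_sum, _root_.map_smul, LinearMap.sum_apply, LinearMap.smul_apply, smul_eq_mul,
    Finset.mul_sum]
  rw [Finset.sum_comm]
  refine Finset.sum_congr rfl fun i _ => Finset.sum_congr rfl fun j _ => ?_
  ring

lemma bilin_dot {L : Type*} [AddCommGroup L] [Module ℤ L] {m : ℕ}
    (B : L →ₗ[ℤ] L →ₗ[ℤ] ℤ) (b : Module.Basis (Fin m) ℤ L) (x y : L) :
    (fun i => ((b.repr x i : ℤ) : ℝ)) ⬝ᵥ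
      ((Matrix.of fun i j => ((B (b i) (b j) : ℤ) : ℝ)) *ᵥ (fun j => ((b.repr y j : ℤ) : ℝ)))
      = ((B x y : ℤ) : ℝ) := by
  rw [bilin_repr B b x y]
  push_cast
  simp only [dotProduct, mulVec, Matrix.of_apply, dotProduct]
  refine Finset.sum_congr rfl fun i _ => ?_
  rw [Finset.mul_sum]
  refine Finset.sum_congr rfl fun j _ => ?_
  ring

theorem stmt16 {L : Type*} [AddCommGroup L] [Module ℤ L]
    (n : ℕ) (B : L →ₗ[ℤ] L →ₗ[ℤ] ℤ)
    (hB : IsSymmBilin B) (hsig : HasSigOneN B n)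
    (h : L) (hh : B h h = 8)
    (f : Fin 16 → L)
    (hf : ∀ i, B (f i) (f i) = -2) (hfh : ∀ i, B (f i) h = 1)
    (hff : ∀ i j, i ≠ j → B (f i) (f j) = 0)
    (ι : L) (hι : B ι ι = 0) (hιh : B ι h = 3)
    (hιf : ∀ i, B ι (f i) = 0 ∨ B ι (f i) = 1) :
    (Finset.univ.filter fun i : Fin 16 => B ι (f i) = 1).card ≤ 2 := by
  obtain ⟨b, P, hP, hcong⟩ := hsig
  set ε : Fin 16 → ℤ := fun i => B ι (f i) with hεdef
  set k : ℤ := ((Finset.univ.filter fun i : Fin 16 => B ι (f i) = 1).card : ℤ) with hkdef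
  have hε01 : ∀ i, ε i = 0 ∨ ε i = 1 := hιf
  have hεsq : ∀ i, ε i * ε i = ε i := by
    intro i
    rcases hε01 i with h0 | h1
    · rw [h0]; ring
    · rw [h1]; ring
  have hsumε : ∑ i, ε i = k := by
    rw [hkdef, Finset.card_filter]
    push_cast
    refine Finset.sum_congr rfl fun i _ => ?_
    rcases hε01 i with h0 | h1
    · rw [h0, if_neg (by rw [show B ι (f i) = ε i from rfl, h0]; norm_num)]
    · rw [h1, if_pos (by rw [show B ι (f i) = ε i from rfl, h1])]
  set c : Fin 16 → ℤ := fun i => (6 + k) - 32 * ε i with hcdef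
  set m : ℤ := 2 * (6 + k) with hmdef
  set w : L := (64 : ℤ) • ι - m • h - ∑ i, c i • f i with hwdef
  -- sum identities
  have hs1 : ∑ i, c i = 16 * (6 + k) - 32 * k := by
    simp only [hcdef, Finset.sum_sub_distrib, Finset.sum_const, Finset.card_univ,
      ← Finset.mul_sum, hsumε]
    simp only [Fintype.card_fin, nsmul_eq_mul, Nat.cast_ofNat]
  have hs2 : ∑ i, c i * ε i = (6 + k) * k - 32 * k := by
    have : ∀ i, c i * ε i = (6 + k) * ε i - 32 * ε i := by
      intro i
      have := hεsq i
      simp only [hcdef]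
      nlinarith [hεsq i]
    rw [Finset.sum_congr rfl fun i _ => this i, Finset.sum_sub_distrib,
      ← Finset.mul_sum, ← Finset.mul_sum, hsumε]
  have hs3 : ∑ i, c i * c i = 16 * (6 + k) ^ 2 - 64 * (6 + k) * k + 1024 * k := by
    have : ∀ i, c i * c i = (6 + k) ^ 2 - 64 * (6 + k) * ε i + 1024 * ε i := by
      intro i
      simp only [hcdef]
      nlinarith [hεsq i]
    rw [Finset.sum_congr rfl fun i _ => this i]
    simp only [Finset.sum_add_distrib, Finset.sum_sub_distrib, Finset.sum_const,
      Finset.card_univ, ← Finset.mul_sum, hsumε]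
    simp only [Fintype.card_fin, nsmul_eq_mul, Nat.cast_ofNat]
  -- expansion lemmas
  have hBw1 : ∀ z : L, B w z = 64 * B ι z - m * B h z - ∑ i, c i * B (f i) z := by
    intro z
    simp only [hwdef, map_sub, map_sum, _root_.map_smul, LinearMap.sub_apply,
      LinearMap.sum_apply, LinearMap.smul_apply, smul_eq_mul]
    norm_num
  have hBw2 : ∀ z : L, B z w = 64 * B z ι - m * B z h - ∑ i, c i * B z (f i) := by
    intro z
    simp only [hwdef, map_sub, map_sum, _root_.map_smul, smul_eq_mul]
    norm_num
  have hwh : B w h = 0 := by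
    rw [hBw1 h, hιh, hh, Finset.sum_congr rfl fun i _ => by rw [hfh i, mul_one], hs1, hmdef]
    ring
  have hfw : ∀ i, B (f i) w = 64 * ε i - m + 2 * c i := by
    intro i
    rw [hBw2 (f i), hB (f i) ι, hfh i]
    have hsing : ∑ j, c j * B (f i) (f j) = c i * B (f i) (f i) :=
      Finset.sum_eq_single i
        (fun j _ hji => by rw [hff i j (Ne.symm hji), mul_zero])
        (fun hi => absurd (Finset.mem_univ i) hi)
    rw [hsing, hf i]
    show 64 * ε i - m * 1 - c i * (-2) = _
    ring
  have hιw : B ι w = -(3 * m) - ∑ i, c i * ε i := by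
    rw [hBw2 ι, hι, hιh]
    ring
  have hhw : B h w = 192 - 8 * m - ∑ i, c i := by
    rw [hBw2 h, hB h ι, hιh, hh,
      Finset.sum_congr rfl fun i _ => by rw [hB h (f i), hfh i, mul_one]]
    ring
  have hww : B w w = -64 * (k ^ 2 - 20 * k + 36) := by
    have hsumfw : ∑ i, c i * B (f i) w
        = 64 * (∑ i, c i * ε i) - m * (∑ i, c i) + 2 * ∑ i, c i * c i := by
      rw [Finset.mul_sum, Finset.mul_sum, Finset.mul_sum, ← Finset.sum_sub_distrib,
        ← Finset.sum_add_distrib]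
      refine Finset.sum_congr rfl fun i _ => ?_
      rw [hfw i]; ring
    rw [hBw1 w, hιw, hhw, hsumfw, hs1, hs2, hs3, hmdef]
    ring
  -- apply the signature lemma
  have hBww : B w w ≤ 0 := by
    have h1 : 0 < (fun i => ((b.repr h i : ℤ) : ℝ)) ⬝ᵥ
        ((Matrix.of fun i j => ((B (b i) (b j) : ℤ) : ℝ)) *ᵥ fun j => ((b.repr h j : ℤ) : ℝ)) := by
      rw [bilin_dot B b h h, hh]; norm_num
    have h2 : (fun i => ((b.repr h i : ℤ) : ℝ)) ⬝ᵥ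
        ((Matrix.of fun i j => ((B (b i) (b j) : ℤ) : ℝ)) *ᵥ fun j => ((b.repr w j : ℤ) : ℝ)) = 0 := by
      rw [bilin_dot B b h w, hB h w, hwh]; norm_num
    have h3 := aux_real n _ P hP hcong _ _ h1 h2
    rw [bilin_dot B b w w] at h3
    exact_mod_cast h3
  rw [hww] at hBww
  have hk16 : k ≤ 16 := by
    rw [hkdef]
    exact_mod_cast le_trans (Finset.card_filter_le _ _) (by simp)
  have hk0 : 0 ≤ k := by rw [hkdef]; positivity
  have : k ≤ 2 := by nlinarith
  rw [hkdef] at this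
  exact_mod_cast this
end

section
/- Let L be a nondegenerate integral lattice of signature (1,n), h ∈ L with h² = 2d ≥ 4. Assume L contains no vector e with e² = 0 and e·h ∈ {1, 2}. Let v₁, …, v_k ∈ L (k ≥ 3, indices mod k) satisfy: vᵢ² = −2, vᵢ·h ∈ {0,1}, vᵢ·v_{i+1} = 1 for all i, and vᵢ·vⱼ ≥ 0 for all i ≠ j. If the sum e := v₁ + ⋯ + v_k is nonzero, then at least 3 of the vᵢ satisfy vᵢ·h = 1. -/
open Matrix

lemma bilin_expand {L : Type*} [AddCommGroup L] [Module ℤ L] {ι : Type*} [Fintype ι]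
    [DecidableEq ι] (B : L →ₗ[ℤ] L →ₗ[ℤ] ℤ) (b : Module.Basis ι ℤ L) (x y : L) :
    B x y = ∑ i, ∑ j, b.repr x i * b.repr y j * B (b i) (b j) := by
  conv_lhs => rw [← b.sum_repr x, ← b.sum_repr y]
  simp only [map_sum, LinearMap.map_smul, LinearMap.sum_apply, LinearMap.smul_apply,
    smul_eq_mul, Finset.mul_sum]
  rw [Finset.sum_comm]
  refine Finset.sum_congr rfl fun i _ => Finset.sum_congr rfl fun j _ => by ring

lemma key_negdef {L : Type*} [AddCommGroup L] [Module ℤ L] {n : ℕ}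
    (B : L →ₗ[ℤ] L →ₗ[ℤ] ℤ) (hsig : HasSigOneN B n)
    (h : L) (hh : 0 < B h h) (f : L) (hfh : B f h = 0)
    (hff : 0 ≤ B f f) : f = 0 := by
  obtain ⟨b, P, hP, hcong⟩ := hsig
  set G : Matrix (Fin (n + 1)) (Fin (n + 1)) ℝ :=
    Matrix.of fun i j => ((B (b i) (b j) : ℤ) : ℝ) with hG
  have hPinv : P * P⁻¹ = 1 := Matrix.mul_nonsing_inv P hP
  have hPinv' : P⁻¹ * P = 1 := Matrix.nonsing_inv_mul P hP
  set c : L → Fin (n + 1) → ℝ := fun x i => ((b.repr x i : ℤ) : ℝ) with hc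
  set w : L → Fin (n + 1) → ℝ := fun x => P⁻¹ *ᵥ c x with hw
  have hGeq : G = (P⁻¹)ᵀ * (Matrix.diagonal (fun i : Fin (n+1) =>
      if i = 0 then (1 : ℝ) else -1) * P⁻¹) := by
    calc G = ((P⁻¹)ᵀ * Pᵀ) * G * (P * P⁻¹) := by
            rw [← Matrix.transpose_mul, hPinv, Matrix.transpose_one, Matrix.one_mul,
              Matrix.mul_one]
    _ = (P⁻¹)ᵀ * (Pᵀ * G * P) * P⁻¹ := by noncomm_ring
    _ = _ := by rw [hcong]; noncomm_ring
  have main : ∀ x y : L, ((B x y : ℤ) : ℝ) =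
      w x 0 * w y 0 - ∑ i : Fin n, w x i.succ * w y i.succ := by
    intro x y
    have h1 : ((B x y : ℤ) : ℝ) = c x ⬝ᵥ (G *ᵥ c y) := by
      rw [bilin_expand B b x y]
      push_cast
      simp only [dotProduct, Matrix.mulVec, dotProduct, hG, Matrix.of_apply, hc,
        Finset.mul_sum]
      refine Finset.sum_congr rfl fun i _ => Finset.sum_congr rfl fun j _ => by ring
    have h2 : (P⁻¹ *ᵥ c x) ⬝ᵥ (Matrix.diagonal (fun i : Fin (n+1) =>
        if i = 0 then (1 : ℝ) else -1) *ᵥ (P⁻¹ *ᵥ c y)) =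
        ∑ i, (if i = 0 then (1:ℝ) else -1) * (w x i * w y i) := by
      simp only [dotProduct, Matrix.mulVec_diagonal, hw]
      exact Finset.sum_congr rfl fun i _ => by ring
    rw [h1, hGeq, ← Matrix.mulVec_mulVec, ← Matrix.mulVec_mulVec,
      Matrix.dotProduct_mulVec, Matrix.vecMul_transpose, h2, Fin.sum_univ_succ]
    simp only [if_pos, Fin.succ_ne_zero, if_neg, reduceIte, one_mul, neg_one_mul,
      not_false_iff]
    rw [Finset.sum_neg_distrib]
    ring
  have hHa := main h h
  have hFa := main f f
  have hFH := main f h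
  rw [hfh] at hFH
  push_cast at hFH
  have hHpos : (0:ℝ) < ((B h h : ℤ) : ℝ) := by exact_mod_cast hh
  have hFpos : (0:ℝ) ≤ ((B f f : ℤ) : ℝ) := by exact_mod_cast hff
  have hSx0 : 0 ≤ ∑ i : Fin n, w f i.succ * w f i.succ :=
    Finset.sum_nonneg fun i _ => mul_self_nonneg _
  have hSa0 : 0 ≤ ∑ i : Fin n, w h i.succ * w h i.succ :=
    Finset.sum_nonneg fun i _ => mul_self_nonneg _
  have cs := Finset.sum_mul_sq_le_sq_mul_sq Finset.univ (fun i : Fin n => w f i.succ)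
    (fun i : Fin n => w h i.succ)
  simp only [pow_two] at cs
  have hSxa : ∑ i : Fin n, w f i.succ * w h i.succ = w f 0 * w h 0 := by linarith [hFH]
  rw [hSxa] at cs
  have hb : (w f 0 * w h 0) * (w f 0 * w h 0) ≤
      (w f 0 * w f 0) * ((w h 0 * w h 0) - ((B h h : ℤ) : ℝ)) := by
    calc (w f 0 * w h 0) * (w f 0 * w h 0) ≤
        (∑ x : Fin n, w f x.succ * w f x.succ) * ∑ x : Fin n, w h x.succ * w h x.succ := cs
      _ ≤ (w f 0 * w f 0) * ∑ x : Fin n, w h x.succ * w h x.succ :=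
          mul_le_mul_of_nonneg_right (by linarith) hSa0
      _ = (w f 0 * w f 0) * ((w h 0 * w h 0) - ((B h h : ℤ) : ℝ)) := by
          rw [show (∑ x : Fin n, w h x.succ * w h x.succ)
            = (w h 0 * w h 0) - ((B h h : ℤ) : ℝ) by linarith]
  have hX0sq : w f 0 * w f 0 ≤ 0 := by nlinarith [hb, hHpos, mul_self_nonneg (w f 0)]
  have hX0 : w f 0 = 0 := mul_self_eq_zero.mp (le_antisymm hX0sq (mul_self_nonneg _))
  have hSx : ∑ i : Fin n, w f i.succ * w f i.succ = 0 := by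
    rw [hX0] at hFa; nlinarith [hFa, hFpos, hSx0]
  have htail : ∀ i : Fin n, w f i.succ = 0 := by
    intro i
    have := (Finset.sum_eq_zero_iff_of_nonneg (fun i _ => mul_self_nonneg (w f i.succ))).mp hSx
      i (Finset.mem_univ i)
    exact mul_self_eq_zero.mp this
  have hwf : w f = 0 := by
    funext j
    refine Fin.cases ?_ ?_ j
    · exact hX0
    · exact htail
  have hcf : c f = 0 := by
    have : P *ᵥ (w f) = c f := by
      rw [hw]; rw [Matrix.mulVec_mulVec, hPinv, Matrix.one_mulVec]
    rw [hwf, Matrix.mulVec_zero] at this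
    exact this.symm
  have hrepr : b.repr f = 0 := by
    ext i
    have : ((b.repr f i : ℤ) : ℝ) = 0 := congrFun hcf i
    exact_mod_cast this
  exact (LinearEquiv.map_eq_zero_iff b.repr).mp hrepr

lemma bilin_smul_left {L : Type*} [AddCommGroup L] [Module ℤ L]
    (B : L →ₗ[ℤ] L →ₗ[ℤ] ℤ) (c : ℤ) (x y : L) : B (c • x) y = c * B x y := by simp

lemma bilin_smul_right {L : Type*} [AddCommGroup L] [Module ℤ L]
    (B : L →ₗ[ℤ] L →ₗ[ℤ] ℤ) (c : ℤ) (x y : L) : B x (c • y) = c * B x y := by simp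

lemma bilin_sub_left {L : Type*} [AddCommGroup L] [Module ℤ L]
    (B : L →ₗ[ℤ] L →ₗ[ℤ] ℤ) (x y z : L) : B (x - y) z = B x z - B y z := by
  rw [map_sub, LinearMap.sub_apply]

lemma bilin_sub_right {L : Type*} [AddCommGroup L] [Module ℤ L]
    (B : L →ₗ[ℤ] L →ₗ[ℤ] ℤ) (x y z : L) : B x (y - z) = B x y - B x z := by
  rw [map_sub]

theorem stmt17 {L : Type*} [AddCommGroup L] [Module ℤ L]
    (n : ℕ) (B : L →ₗ[ℤ] L →ₗ[ℤ] ℤ)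
    (hB : IsSymmBilin B) (hsig : HasSigOneN B n)
    (h : L) (d : ℤ) (hd : 2 ≤ d) (hh : B h h = 2 * d)
    (hnoiso : ¬ ∃ e : L, B e e = 0 ∧ (B e h = 1 ∨ B e h = 2))
    (k : ℕ) [NeZero k] (hk : 3 ≤ k) (v : ZMod k → L)
    (hv : ∀ i, B (v i) (v i) = -2)
    (hvh : ∀ i, B (v i) h = 0 ∨ B (v i) h = 1)
    (hcyc : ∀ i, B (v i) (v (i + 1)) = 1)
    (hpos : ∀ i j, i ≠ j → 0 ≤ B (v i) (v j))
    (hsum : (∑ i : ZMod k, v i) ≠ 0) :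
    3 ≤ (Finset.univ.filter fun i : ZMod k => B (v i) h = 1).card := by
  by_contra hcon
  push_neg at hcon
  haveI : Fact (1 < k) := ⟨by omega⟩
  set e : L := ∑ i : ZMod k, v i with he
  set m : ℕ := (Finset.univ.filter fun i : ZMod k => B (v i) h = 1).card with hm
  have hm2 : m ≤ 2 := by omega
  have hh0 : 0 < B h h := by rw [hh]; linarith
  -- B e h = m
  have hBeh : B e h = (m : ℤ) := by
    have h1 : B e h = ∑ i : ZMod k, B (v i) h := by
      rw [he]; simp only [map_sum, LinearMap.sum_apply]
    rw [h1, hm, Finset.card_filter]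
    push_cast
    refine Finset.sum_congr rfl fun i _ => ?_
    rcases hvh i with h0 | h1
    · simp [h0]
    · simp [h1]
  -- distinctness in ZMod k
  have hone : (1 : ZMod k) ≠ 0 := one_ne_zero
  have htwo : (2 : ZMod k) ≠ 0 := by
    intro hcontr
    have h2 : ((2 : ℕ) : ZMod k) = 0 := by exact_mod_cast hcontr
    rw [ZMod.natCast_eq_zero_iff] at h2
    have := Nat.le_of_dvd (by norm_num) h2
    omega
  -- 0 ≤ B e e
  have hrow : ∀ i : ZMod k, 0 ≤ ∑ j : ZMod k, B (v i) (v j) := by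
    intro i
    have d1 : i - 1 ≠ i := fun hc => hone (sub_eq_self.mp hc)
    have d2 : i + 1 ≠ i := fun hc => hone (add_eq_left.mp hc)
    have d3 : i - 1 ≠ i + 1 := fun hc => htwo (by linear_combination -hc)
    have hsub : ({i - 1, i, i + 1} : Finset (ZMod k)) ⊆ Finset.univ := Finset.subset_univ _
    rw [← Finset.sum_sdiff hsub]
    have hA : 0 ≤ ∑ j ∈ Finset.univ \ ({i - 1, i, i + 1} : Finset (ZMod k)), B (v i) (v j) := by
      refine Finset.sum_nonneg fun j hj => ?_
      rw [Finset.mem_sdiff] at hj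
      refine hpos i j fun hij => ?_
      exact hj.2 (by simp [← hij])
    have hvim : B (v i) (v (i - 1)) = 1 := by
      rw [hB]
      have := hcyc (i - 1)
      rwa [sub_add_cancel] at this
    have hBset : ∑ j ∈ ({i - 1, i, i + 1} : Finset (ZMod k)), B (v i) (v j) = 0 := by
      rw [Finset.sum_insert (by simp [d1, d3]), Finset.sum_insert (by simp [d2.symm]),
        Finset.sum_singleton, hvim, hv i, hcyc i]
      ring
    linarith
  have hBee : 0 ≤ B e e := by
    have h1 : B e e = ∑ i : ZMod k, ∑ j : ZMod k, B (v i) (v j) := by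
      rw [he]
      simp only [map_sum, LinearMap.sum_apply]
      rw [Finset.sum_comm]
    rw [h1]
    exact Finset.sum_nonneg fun i _ => hrow i
  -- case m = 0
  rcases Nat.eq_zero_or_pos m with hm0 | hm1
  · rw [hm0] at hBeh
    exact hsum (key_negdef B hsig h hh0 e (by exact_mod_cast hBeh) hBee)
  -- case 1 ≤ m ≤ 2
  have hBhe : B h e = (m : ℤ) := by rw [hB h e]; exact hBeh
  set f : L := (2 * d) • e - (m : ℤ) • h with hf
  have hBfh : B f h = 0 := by
    rw [hf]
    simp only [bilin_sub_left, bilin_smul_left, hBeh, hh]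
    ring
  have hBff : B f f = 2 * d * (2 * d * B e e - (m : ℤ) ^ 2) := by
    rw [hf]
    simp only [bilin_sub_left, bilin_sub_right, bilin_smul_left, bilin_smul_right,
      hBeh, hBhe, hh]
    ring
  by_cases hf0 : f = 0
  · -- (2d) • e = m • h; pick i0 with B (v i0) h = 1
    have hfe : (2 * d) • e = (m : ℤ) • h := by
      refine sub_eq_zero.mp ?_
      rw [← hf]; exact hf0
    obtain ⟨i0, hi0⟩ := Finset.card_pos.mp (hm ▸ hm1)
    have hvi0 : B (v i0) h = 1 := (Finset.mem_filter.mp hi0).2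
    have heq : (2 * d) * B (v i0) e = (m : ℤ) := by
      have h3 := congrArg (fun z => B (v i0) z) hfe
      simp only [bilin_smul_right] at h3
      rw [hvi0, mul_one] at h3
      exact h3
    rcases le_or_gt (B (v i0) e) 0 with hz | hz
    · nlinarith [heq, hd, hm1, hz]
    · have hz1 : 1 ≤ B (v i0) e := hz
      have hmle : (m : ℤ) ≤ 2 := by exact_mod_cast hm2
      nlinarith [heq, hd, hz1, hmle]
  · -- f ≠ 0 : B f f < 0
    have hBffneg : B f f < 0 := by
      by_contra hge
      push_neg at hge
      exact hf0 (key_negdef B hsig h hh0 f hBfh hge)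
    rw [hBff] at hBffneg
    have hmle : (m : ℤ) ≤ 2 := by exact_mod_cast hm2
    have hBee0 : B e e = 0 := by
      have hle : B e e ≤ 0 := by
        by_contra hgt
        push_neg at hgt
        have h1 : (1 : ℤ) ≤ B e e := hgt
        have h2 : 2 * d * B e e - (m : ℤ) ^ 2 < 0 := by
          by_contra h2'
          push_neg at h2'
          exact absurd hBffneg (not_lt.mpr (mul_nonneg (by linarith) h2'))
        have hsq : (m : ℤ) ^ 2 ≤ 4 := by
          have hm0 : (0 : ℤ) ≤ (m : ℤ) := by positivity
          nlinarith [hmle, hm0]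
        have h4 : 4 * B e e ≤ 2 * d * B e e :=
          mul_le_mul_of_nonneg_right (by linarith) (by linarith)
        linarith
      exact le_antisymm hle hBee
    refine hnoiso ⟨e, hBee0, ?_⟩
    have hm12 : m = 1 ∨ m = 2 := by omega
    rcases hm12 with h1 | h2
    · left; rw [hBeh, h1]; norm_num
    · right; rw [hBeh, h2]; norm_num
end

section
/- Every binary linear code of length 16 and minimum Hamming distance at least 8 has dimension at most 5. -/
set_option maxHeartbeats 1000000
set_option synthInstance.maxHeartbeats 200000


open Matrix

theorem stmt18 (C : Submodule (ZMod 2) (Fin 16 → ZMod 2))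
    (hdist : ∀ c ∈ C, c ≠ 0 → 8 ≤ hammingNorm c) :
    Module.finrank (ZMod 2) C ≤ 5 := by
  classical
  by_contra hlt
  push_neg at hlt
  -- shorten at coordinate 0
  set φ : C →ₗ[ZMod 2] ZMod 2 := (LinearMap.proj (0 : Fin 16)).comp C.subtype with hφ
  set K := LinearMap.ker φ with hKdef
  haveI : Fintype C := Fintype.ofFinite _
  haveI : Fintype K := Fintype.ofFinite _
  haveI : Nonempty K := ⟨0⟩
  have hK5 : 5 ≤ Module.finrank (ZMod 2) K := by
    have h1 := LinearMap.finrank_range_add_finrank_ker φ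
    have h2 : Module.finrank (ZMod 2) (LinearMap.range φ) ≤ 1 := by
      simpa using Submodule.finrank_le (LinearMap.range φ)
    rw [← hKdef] at h1
    omega
  set M := Fintype.card K with hMdef
  have hM : 32 ≤ M := by
    rw [hMdef, Module.card_eq_pow_finrank (K := ZMod 2) (V := K)]
    calc (32 : ℕ) = 2 ^ 5 := by norm_num
    _ ≤ _ := by
      apply Nat.pow_le_pow_right (by norm_num)
      simpa using hK5
  have hone : ∀ a : ZMod 2, a ≠ 0 → a = 1 := by decide
  -- column counts
  set N : Fin 16 → ℕ := fun j => (Finset.univ.filter (fun x : K => x.1.1 j ≠ 0)).card with hN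
  set S : ℕ := ∑ x : K, hammingNorm x.1.1 with hS
  have hswap : S = ∑ j : Fin 16, N j := by
    rw [hS, hN]
    simp only [hammingNorm, Finset.card_filter]
    rw [Finset.sum_comm]
  have hN0 : N 0 = 0 := by
    rw [hN]
    simp only [Finset.card_eq_zero, Finset.filter_eq_empty_iff]
    intro x _
    rw [not_not]
    exact x.2
  have hNj : ∀ j : Fin 16, 2 * N j ≤ M := by
    intro j
    set A := Finset.univ.filter (fun x : K => x.1.1 j ≠ 0) with hA
    set B := Finset.univ.filter (fun x : K => ¬ x.1.1 j ≠ 0) with hB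
    have hAB : A.card + B.card = M := by
      rw [hA, hB, Finset.card_filter_add_card_filter_not]
      rfl
    have hle : A.card ≤ B.card := by
      rcases Finset.eq_empty_or_nonempty A with he | ⟨c₀, hc₀⟩
      · simp [he]
      · apply Finset.card_le_card_of_injOn (fun x => x + c₀)
        · intro x hx
          simp only [Finset.mem_coe] at hx ⊢
          rw [hA, Finset.mem_filter] at hx hc₀
          rw [hB, Finset.mem_filter]
          refine ⟨Finset.mem_univ _, ?_⟩
          have hx1 := hone _ hx.2
          have hc1 := hone _ hc₀.2
          have : (x + c₀).1.1 j = x.1.1 j + c₀.1.1 j := rfl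
          rw [not_not, this, hx1, hc1]
          decide
        · intro a _ b _ hab
          exact add_right_cancel hab
    have hNA : N j = A.card := rfl
    omega
  -- lower bound on S
  have hlow : 8 * (M - 1) ≤ S := by
    have hsub : (Finset.univ.erase (0 : K)).card = M - 1 := by
      rw [Finset.card_erase_of_mem (Finset.mem_univ _)]
      rfl
    calc 8 * (M - 1) = (Finset.univ.erase (0 : K)).card * 8 := by rw [hsub]; ring
    _ ≤ ∑ x ∈ Finset.univ.erase (0 : K), hammingNorm x.1.1 := by
        have h := Finset.card_nsmul_le_sum (Finset.univ.erase (0 : K))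
          (fun x => hammingNorm x.1.1) 8 ?_
        · simpa [smul_eq_mul] using h
        intro x hx
        apply hdist _ x.1.2
        intro h0
        have hx0 : x = 0 := by
          ext i
          exact congrFun h0 i
        rw [Finset.mem_erase] at hx
        exact hx.1 hx0
    _ ≤ S := Finset.sum_le_sum_of_subset (Finset.erase_subset _ _)
  -- upper bound: 2 * S ≤ 15 * M
  have hup : 2 * S ≤ 15 * M := by
    rw [hswap, Finset.mul_sum]
    calc ∑ j : Fin 16, 2 * N j = ∑ j ∈ Finset.univ.erase (0 : Fin 16), 2 * N j := by
          rw [Finset.sum_erase _ (by simp [hN0])]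
    _ ≤ ∑ j ∈ Finset.univ.erase (0 : Fin 16), M := Finset.sum_le_sum (fun j _ => hNj j)
    _ = 15 * M := by simp
  omega
end
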